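/- arXiv:0707.4588 — 4 statements merged into one kernel-verified Lean document; each statement's English description precedes it below -/
import Mathlib

section
/- Let u : [a,b] → ℝ be continuous and let J = [α,β] ⊆ [a,b] be admissible for u. If u(α) ≥ 0 and u(β) ≥ 0, then u(x) ≥ 0 for all x ∈ J. Analogously, if u(α) ≤ 0 and u(β) ≤ 0, then u(x) ≤ 0 for all x ∈ J. -/
open Set

/-- A continuous function `u` has a *double crossover* on `[α, β]` if for some sign
`σ ∈ {+1, −1}` one has `σ·u(α) ≥ 0`, `σ·u((α+β)/2) ≤ 0` and `σ·u(β) ≥ 0`. -/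
def DoubleCrossover (u : ℝ → ℝ) (α β : ℝ) : Prop :=
  ∃ σ : ℝ, (σ = 1 ∨ σ = -1) ∧
    0 ≤ σ * u α ∧ σ * u ((α + β) / 2) ≤ 0 ∧ 0 ≤ σ * u β

/-- The interval `[α, β]` is *admissible* for `u` if `u` has no double crossover on any
dyadic subinterval `[d_{n,k}, d_{n,k+1}]`, where `d_{n,k} = α + (β − α)·k/2^n`. -/
def IntervalAdmissible (u : ℝ → ℝ) (α β : ℝ) : Prop :=
  ∀ n k : ℕ, k < 2 ^ n →
    ¬ DoubleCrossover u (α + (β - α) * k / 2 ^ n) (α + (β - α) * (k + 1) / 2 ^ n)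

lemma dyadic_nonneg (α β : ℝ) (u : ℝ → ℝ) (hadm : IntervalAdmissible u α β)
    (h0 : 0 ≤ u α) (h1 : 0 ≤ u β) :
    ∀ n k : ℕ, k ≤ 2 ^ n → 0 ≤ u (α + (β - α) * k / 2 ^ n) := by
  intro n
  induction n with
  | zero =>
    intro k hk
    interval_cases k
    · simpa using h0
    · have : α + (β - α) * (1 : ℕ) / 2 ^ (0 : ℕ) = β := by push_cast; ring
      rw [this]; exact h1
  | succ n ih =>
    intro k hk
    have h2 : 2 ^ (n + 1) = 2 * 2 ^ n := by ring
    rcases Nat.even_or_odd k with ⟨j, hj⟩ | ⟨j, hj⟩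
    · subst hj
      have hj2 : j ≤ 2 ^ n := by omega
      have he : α + (β - α) * ((j + j : ℕ) : ℝ) / 2 ^ (n + 1)
          = α + (β - α) * (j : ℝ) / 2 ^ n := by push_cast; ring
      rw [he]; exact ih j hj2
    · subst hj
      have hjlt : j < 2 ^ n := by omega
      by_contra hneg
      push_neg at hneg
      apply hadm n j hjlt
      refine ⟨1, Or.inl rfl, by simpa using ih j hjlt.le, ?_, by simpa using ih (j + 1) hjlt⟩
      have he : (α + (β - α) * (j : ℝ) / 2 ^ n + (α + (β - α) * ((j : ℝ) + 1) / 2 ^ n)) / 2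
          = α + (β - α) * ((2 * j + 1 : ℕ) : ℝ) / 2 ^ (n + 1) := by push_cast; ring
      rw [he]
      simpa using hneg.le

lemma aux_nonneg (a b α β : ℝ) (u : ℝ → ℝ)
    (hcont : ContinuousOn u (Icc a b))
    (haα : a ≤ α) (hαβ : α ≤ β) (hβb : β ≤ b)
    (hadm : IntervalAdmissible u α β)
    (h0 : 0 ≤ u α) (h1 : 0 ≤ u β) :
    ∀ x ∈ Icc α β, 0 ≤ u x := by
  intro x hx
  rcases eq_or_lt_of_le hαβ with heq | hlt
  · obtain rfl : x = α := le_antisymm (heq ▸ hx.2) hx.1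
    exact h0
  have hba : (0 : ℝ) < β - α := by linarith
  set t : ℝ := (x - α) / (β - α) with ht
  have ht0 : 0 ≤ t := div_nonneg (by linarith [hx.1]) hba.le
  have ht1 : t ≤ 1 := by
    rw [ht, div_le_one hba]; linarith [hx.2]
  set K : ℕ → ℕ := fun n => ⌊t * 2 ^ n⌋₊ with hK
  set D : ℕ → ℝ := fun n => α + (β - α) * (K n : ℝ) / 2 ^ n with hDdef
  have hk_le : ∀ n, (K n : ℝ) ≤ t * 2 ^ n := fun n => Nat.floor_le (by positivity)
  have hk_gt : ∀ n, t * 2 ^ n < (K n : ℝ) + 1 := fun n => Nat.lt_floor_add_one _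
  have hk2n : ∀ n, K n ≤ 2 ^ n := by
    intro n
    have hc : (K n : ℝ) ≤ ((2 ^ n : ℕ) : ℝ) := by
      push_cast
      calc (K n : ℝ) ≤ t * 2 ^ n := hk_le n
        _ ≤ 1 * 2 ^ n := by
            apply mul_le_mul_of_nonneg_right ht1 (by positivity)
        _ = 2 ^ n := by ring
    exact_mod_cast hc
  have hxeq : x = α + t * (β - α) := by
    rw [ht, div_mul_eq_mul_div, mul_div_assoc, div_self hba.ne', mul_one]; ring
  have hDmem : ∀ n, D n ∈ Icc α β := by
    intro n
    constructor
    · have : 0 ≤ (β - α) * (K n : ℝ) / 2 ^ n := by positivity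
      simp only [hDdef]; linarith
    · have h1' : (K n : ℝ) / 2 ^ n ≤ 1 := by
        rw [div_le_one (by positivity : (0:ℝ) < 2 ^ n)]
        exact_mod_cast Nat.cast_le.mpr (hk2n n) |>.trans_eq (by push_cast; ring)
      have h2' : (β - α) * ((K n : ℝ) / 2 ^ n) ≤ (β - α) * 1 :=
        mul_le_mul_of_nonneg_left h1' hba.le
      simp only [hDdef]
      rw [mul_div_assoc]
      linarith
  have hbound : ∀ n, ‖D n - x‖ ≤ (β - α) * (1 / 2) ^ n := by
    intro n
    have h2n : (0 : ℝ) < 2 ^ n := by positivity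
    have e1 : D n - x = (β - α) * ((K n : ℝ) / 2 ^ n - t) := by
      rw [hDdef, hxeq]; ring
    have hle : (K n : ℝ) / 2 ^ n - t ≤ 0 := by
      rw [sub_nonpos, div_le_iff₀ h2n]; exact hk_le n
    have hge : t - (K n : ℝ) / 2 ^ n ≤ (1 / 2) ^ n := by
      have h' : t ≤ ((K n : ℝ) + 1) / 2 ^ n := by
        rw [le_div_iff₀ h2n]; linarith [hk_gt n]
      have heq : ((K n : ℝ) + 1) / 2 ^ n = (K n : ℝ) / 2 ^ n + (1 / 2 : ℝ) ^ n := by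
        rw [div_pow, one_pow]; ring
      rw [heq] at h'
      linarith
    rw [e1, Real.norm_eq_abs, abs_mul, abs_of_pos hba, abs_of_nonpos hle]
    have : -((K n : ℝ) / 2 ^ n - t) ≤ (1 / 2) ^ n := by linarith
    exact mul_le_mul_of_nonneg_left this hba.le
  have htend0 : Filter.Tendsto (fun n => (β - α) * (1 / 2 : ℝ) ^ n) Filter.atTop (nhds 0) := by
    have := (tendsto_pow_atTop_nhds_zero_of_lt_one (by norm_num : (0:ℝ) ≤ 1/2)
      (by norm_num : (1/2 : ℝ) < 1)).const_mul (β - α)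
    simpa using this
  have hDx : Filter.Tendsto D Filter.atTop (nhds x) := by
    rw [tendsto_iff_norm_sub_tendsto_zero]
    exact squeeze_zero (fun n => norm_nonneg _) hbound htend0
  have hxab : x ∈ Icc a b := ⟨haα.trans hx.1, hx.2.trans hβb⟩
  have hDab : ∀ n, D n ∈ Icc a b := fun n =>
    ⟨haα.trans (hDmem n).1, (hDmem n).2.trans hβb⟩
  have hutend : Filter.Tendsto (fun n => u (D n)) Filter.atTop (nhds (u x)) :=
    (hcont x hxab).tendsto.comp
      (tendsto_nhdsWithin_of_tendsto_nhds_of_eventually_within D hDx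
        (Filter.Eventually.of_forall hDab))
  exact ge_of_tendsto' hutend fun n => dyadic_nonneg α β u hadm h0 h1 n (K n) (hk2n n)

/-- **Lemma 2.3.** If `J = [α, β] ⊆ [a, b]` is admissible for the continuous function `u`
and `u(α) ≥ 0`, `u(β) ≥ 0`, then `u ≥ 0` on `J`; analogously for `≤ 0`. -/
theorem nonneg_on_admissible_interval (a b α β : ℝ) (u : ℝ → ℝ)
    (hcont : ContinuousOn u (Icc a b))
    (haα : a ≤ α) (hαβ : α ≤ β) (hβb : β ≤ b)
    (hadm : IntervalAdmissible u α β) :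
    ((0 ≤ u α ∧ 0 ≤ u β) → ∀ x ∈ Icc α β, 0 ≤ u x) ∧
    ((u α ≤ 0 ∧ u β ≤ 0) → ∀ x ∈ Icc α β, u x ≤ 0) := by
  constructor
  · rintro ⟨h0, h1⟩
    exact aux_nonneg a b α β u hcont haα hαβ hβb hadm h0 h1
  · rintro ⟨h0, h1⟩ x hx
    have hadm' : IntervalAdmissible (fun y => -u y) α β := by
      intro n k hk ⟨σ, hσ, hA, hB, hC⟩
      apply hadm n k hk
      refine ⟨-σ, ?_, by simpa [neg_mul, mul_neg] using hA,
        by simpa [neg_mul, mul_neg] using hB, by simpa [neg_mul, mul_neg] using hC⟩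
      rcases hσ with h | h <;> simp [h]
    have := aux_nonneg a b α β (fun y => -u y) hcont.neg haα hαβ hβb hadm'
      (by simpa using h0) (by simpa using h1) x hx
    simpa using this
end

section
/- Let L > 0 and let (a_k)_{k≥0} be real numbers with Σ_k k⁸·a_k² < ∞ such that at least two of the a_k are nonzero. Define r(δ) = Σ_{k≥0} a_k²·cos(2πkδ/L), A_ℓ = Σ_{k≥0} k^{2ℓ}·a_k², R_ℓ = (2π/L)^{2ℓ}·A_ℓ, and for δ > 0 let C(δ) be the symmetric 3×3 matrix with rows (r(0), r(δ/2), r(δ)), (r(δ/2), r(0), r(δ/2)), (r(δ), r(δ/2), r(0)). Then as δ → 0⁺, det C(δ) = (R₁/64)·(R₀R₂ − R₁²)·δ⁶ + O(δ⁸); in particular C(δ) is positive definite for all sufficiently small δ > 0. -/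
open Real Filter Topology Asymptotics

private lemma nonneg_of_hasDerivAt (f f' : ℝ → ℝ) (hf : ∀ x, HasDerivAt f (f' x) x)
    (h0 : f 0 = 0) (hd : ∀ x, 0 ≤ x → 0 ≤ f' x) : ∀ x, 0 ≤ x → 0 ≤ f x := by
  intro x hx
  have hmono : MonotoneOn f (Set.Ici 0) := by
    apply monotoneOn_of_deriv_nonneg (convex_Ici 0)
    · exact (continuous_iff_continuousAt.2 fun y => (hf y).continuousAt).continuousOn
    · intro y _; exact (hf y).differentiableAt.differentiableWithinAt
    · intro y hy
      rw [(hf y).deriv]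
      exact hd y (le_of_lt (by simpa using hy))
  calc (0:ℝ) = f 0 := h0.symm
  _ ≤ f x := hmono Set.self_mem_Ici hx hx

private lemma sin_ge_aux : ∀ x : ℝ, 0 ≤ x → 0 ≤ Real.sin x - (x - x^3/6) := by
  apply nonneg_of_hasDerivAt _ (fun x => Real.cos x - (1 - x^2/2))
  · intro x
    exact ((Real.hasDerivAt_sin x).sub (((hasDerivAt_id x).sub
      ((hasDerivAt_pow 3 x).div_const 6)))).congr_deriv (by ring)
  · simp
  · intro x _
    have := Real.one_sub_sq_div_two_le_cos (x := x); linarith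

private lemma cos_le_aux : ∀ x : ℝ, 0 ≤ x → 0 ≤ (1 - x^2/2 + x^4/24) - Real.cos x := by
  apply nonneg_of_hasDerivAt _ (fun x => Real.sin x - (x - x^3/6))
  · intro x
    exact ((((hasDerivAt_const x (1:ℝ)).sub ((hasDerivAt_pow 2 x).div_const 2)).add
      ((hasDerivAt_pow 4 x).div_const 24)).sub (Real.hasDerivAt_cos x)).congr_deriv
      (by push_cast; ring)
  · norm_num
  · exact sin_ge_aux

private lemma sin_le_aux : ∀ x : ℝ, 0 ≤ x → 0 ≤ (x - x^3/6 + x^5/120) - Real.sin x := by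
  apply nonneg_of_hasDerivAt _ (fun x => (1 - x^2/2 + x^4/24) - Real.cos x)
  · intro x
    exact ((((hasDerivAt_id x).sub ((hasDerivAt_pow 3 x).div_const 6)).add
      ((hasDerivAt_pow 5 x).div_const 120)).sub (Real.hasDerivAt_sin x)).congr_deriv
      (by push_cast; ring)
  · simp
  · exact cos_le_aux

private lemma cos_ge_aux : ∀ x : ℝ, 0 ≤ x → 0 ≤ Real.cos x - (1 - x^2/2 + x^4/24 - x^6/720) := by
  apply nonneg_of_hasDerivAt _ (fun x => (x - x^3/6 + x^5/120) - Real.sin x)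
  · intro x
    exact ((Real.hasDerivAt_cos x).sub ((((hasDerivAt_const x (1:ℝ)).sub
      ((hasDerivAt_pow 2 x).div_const 2)).add ((hasDerivAt_pow 4 x).div_const 24)).sub
      ((hasDerivAt_pow 6 x).div_const 720))).congr_deriv (by push_cast; ring)
  · norm_num
  · exact sin_le_aux

private lemma cos_taylor_bound (x : ℝ) : |Real.cos x - (1 - x^2/2 + x^4/24)| ≤ x^6/720 := by
  rcases le_total 0 x with hx | hx
  · have h1 := cos_le_aux x hx
    have h2 := cos_ge_aux x hx
    rw [abs_le]; constructor <;> linarith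
  · have hx' : 0 ≤ -x := by linarith
    have h1 := cos_le_aux (-x) hx'
    have h2 := cos_ge_aux (-x) hx'
    rw [Real.cos_neg] at h1 h2
    rw [abs_le]; constructor <;> nlinarith [h1, h2]

private lemma quad_core {c Q S Y W : ℝ} (hc : 0 < c) (hcb : 0 < W)
    (hkey : W*(c*Q - S^2) = Y) (hY : 0 < Y) : 0 < Q := by
  have h1 : 0 < c*Q - S^2 := by
    rcases lt_trichotomy (c*Q - S^2) 0 with h | h | h
    · nlinarith
    · rw [h, mul_zero] at hkey; linarith
    · exact h
  nlinarith [sq_nonneg S]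

private lemma posdef_quadratic_aux {c b d u v z : ℝ} (hc : 0 < c) (hm2 : b^2 < c^2)
    (hdet : 0 < c^3 - 2*c*b^2 + 2*d*b^2 - c*d^2)
    (hx : u ≠ 0 ∨ v ≠ 0 ∨ z ≠ 0) :
    0 < c*u^2 + c*v^2 + c*z^2 + 2*b*u*v + 2*b*v*z + 2*d*u*z := by
  have hcb : 0 < c^2 - b^2 := by linarith
  rcases eq_or_ne z 0 with rfl | hz
  · rcases eq_or_ne v 0 with rfl | hv
    · have hu : u ≠ 0 := by tauto
      have : c*u^2 + c*0^2 + c*0^2 + 2*b*u*0 + 2*b*0*0 + 2*d*u*0 = c*u^2 := by ring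
      rw [this]; positivity
    · refine quad_core hc hcb (Y := ((c^2-b^2)*v)^2) (S := c*u + b*v + d*0) (by ring) ?_
      positivity
  · refine quad_core hc hcb
      (Y := ((c^2-b^2)*v + b*(c-d)*z)^2 + c*(c^3 - 2*c*b^2 + 2*d*b^2 - c*d^2)*z^2)
      (S := c*u + b*v + d*z) (by ring) ?_
    have : 0 < c*(c^3 - 2*c*b^2 + 2*d*b^2 - c*d^2)*z^2 :=
      mul_pos (mul_pos hc hdet) (by positivity)
    positivity

set_option maxHeartbeats 1000000 in
/-- For the covariance matrix `C(δ)` of `(u(x), u(x+δ/2), u(x+δ))` for a random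
`L`-periodic function with covariance function `r`, one has
`det C(δ) = (R₁/64)(R₀R₂ − R₁²)δ⁶ + O(δ⁸)` as `δ → 0⁺`; in particular `C(δ)` is
positive definite for all sufficiently small `δ > 0`. -/
theorem covariance_det_asymptotics (L : ℝ) (hL : 0 < L) (a : ℕ → ℝ)
    (hsum : Summable fun k : ℕ => (k : ℝ) ^ 8 * a k ^ 2)
    (hnz : ∃ k₁ k₂ : ℕ, k₁ ≠ k₂ ∧ a k₁ ≠ 0 ∧ a k₂ ≠ 0)
    (r : ℝ → ℝ) (hr : ∀ δ, r δ = ∑' k : ℕ, a k ^ 2 * Real.cos (2 * π * k * δ / L))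
    (A : ℕ → ℝ) (hA : ∀ l, A l = ∑' k : ℕ, (k : ℝ) ^ (2 * l) * a k ^ 2)
    (R : ℕ → ℝ) (hR : ∀ l, R l = (2 * π / L) ^ (2 * l) * A l)
    (C : ℝ → Matrix (Fin 3) (Fin 3) ℝ)
    (hC : ∀ δ, C δ = !![r 0, r (δ / 2), r δ;
                       r (δ / 2), r 0, r (δ / 2);
                       r δ, r (δ / 2), r 0]) :
    (fun δ => (C δ).det - R 1 / 64 * (R 0 * R 2 - R 1 ^ 2) * δ ^ 6)
        =O[𝓝[>] (0 : ℝ)] (fun δ => δ ^ 8) ∧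
      ∀ᶠ δ in 𝓝[>] (0 : ℝ), (C δ).PosDef := by
  have hπ := Real.pi_pos
  obtain ⟨k₁, k₂, hk12, ha1, ha2⟩ := hnz
  -- summability
  have hsq : ∀ m : ℕ, m ≤ 8 → Summable (fun k : ℕ => (k:ℝ)^m * a k^2) := by
    intro m hm
    rw [← summable_nat_add_iff 1]
    refine Summable.of_nonneg_of_le (fun k => by positivity) (fun k => ?_)
      ((summable_nat_add_iff 1).2 hsum)
    have h1 : (1:ℝ) ≤ ((k+1 : ℕ):ℝ) := by exact_mod_cast Nat.succ_le_succ (Nat.zero_le k)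
    exact mul_le_mul_of_nonneg_right (pow_le_pow_right₀ h1 hm) (sq_nonneg _)
  have hs0 : Summable (fun k : ℕ => a k^2) := by simpa using hsq 0 (by norm_num)
  have hs2 := hsq 2 (by norm_num)
  have hs4 := hsq 4 (by norm_num)
  have hs6 := hsq 6 (by norm_num)
  have hA0 : A 0 = ∑' k:ℕ, a k^2 := by rw [hA 0]; norm_num
  have hA1 : A 1 = ∑' k:ℕ, (k:ℝ)^2 * a k^2 := by rw [hA 1]
  have hA2 : A 2 = ∑' k:ℕ, (k:ℝ)^4 * a k^2 := by rw [hA 2]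
  have hA3 : A 3 = ∑' k:ℕ, (k:ℝ)^6 * a k^2 := by rw [hA 3]
  have hA0pos : 0 < A 0 := by
    rw [hA0]
    refine Summable.tsum_pos hs0 (fun k => sq_nonneg _) k₁ ?_
    positivity
  -- an index ≥ 1 with nonzero coefficient
  obtain ⟨m₀, hm₀, ham⟩ : ∃ m, 1 ≤ m ∧ a m ≠ 0 := by
    rcases Nat.eq_zero_or_pos k₁ with rfl | h1
    · exact ⟨k₂, Nat.one_le_iff_ne_zero.2 (fun h => hk12 h.symm), ha2⟩
    · exact ⟨k₁, h1, ha1⟩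
  have hA1pos : 0 < A 1 := by
    rw [hA1]
    refine Summable.tsum_pos hs2 (fun k => by positivity) m₀ ?_
    have : (0:ℝ) < (m₀:ℝ) := by exact_mod_cast hm₀
    positivity
  have hgapA : 0 < A 0 * A 2 - A 1^2 := by
    set t := A 1 / A 0 with ht
    have hhs : Summable (fun k : ℕ => a k^2 * ((k:ℝ)^2 - t)^2) := by
      have := (hs4.sub (hs2.mul_left (2*t))).add (hs0.mul_left (t^2))
      refine this.congr (fun k => ?_)
      ring
    have hteq : ∑' k:ℕ, a k^2 * ((k:ℝ)^2 - t)^2 = A 2 - 2*t*A 1 + t^2*A 0 := by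
      have e : ∀ k:ℕ, a k^2 * ((k:ℝ)^2 - t)^2
          = ((k:ℝ)^4*a k^2 - 2*t*((k:ℝ)^2*a k^2)) + t^2*a k^2 := by intro k; ring
      rw [tsum_congr e, Summable.tsum_add (hs4.sub (hs2.mul_left (2*t))) (hs0.mul_left (t^2)),
        Summable.tsum_sub hs4 (hs2.mul_left (2*t)), tsum_mul_left, tsum_mul_left,
        hA0, hA1, hA2]
    -- pick index where (k:ℝ)^2 ≠ t
    obtain ⟨n₀, han, hnt⟩ : ∃ n, a n ≠ 0 ∧ ((n:ℝ)^2 - t) ≠ 0 := by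
      by_cases h : ((k₁:ℝ)^2 - t) ≠ 0
      · exact ⟨k₁, ha1, h⟩
      · push_neg at h
        refine ⟨k₂, ha2, fun h2 => hk12 ?_⟩
        have : ((k₁:ℝ))^2 = ((k₂:ℝ))^2 := by linarith [sub_eq_zero.1 h, sub_eq_zero.1 h2]
        have : (k₁:ℝ) = (k₂:ℝ) := by
          have h1 : (0:ℝ) ≤ (k₁:ℝ) := Nat.cast_nonneg _
          have h2' : (0:ℝ) ≤ (k₂:ℝ) := Nat.cast_nonneg _
          nlinarith
        exact_mod_cast this
    have hpos : 0 < ∑' k:ℕ, a k^2 * ((k:ℝ)^2 - t)^2 := by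
      refine Summable.tsum_pos hhs (fun k => by positivity) n₀ ?_
      positivity
    rw [hteq] at hpos
    have key : A 0 * A 2 - A 1^2 = (A 2 - 2*t*A 1 + t^2*A 0) * A 0 := by
      rw [ht]; field_simp; ring
    rw [key]
    exact mul_pos hpos hA0pos
  have hR0pos : 0 < R 0 := by
    rw [hR 0]; norm_num; exact hA0pos
  have hR1pos : 0 < R 1 := by
    rw [hR 1]
    exact mul_pos (by positivity) hA1pos
  have hgap : 0 < R 0 * R 2 - R 1^2 := by
    have e : R 0 * R 2 - R 1^2 = (2*π/L)^4 * (A 0 * A 2 - A 1^2) := by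
      rw [hR 0, hR 1, hR 2]; norm_num; ring
    rw [e]
    exact mul_pos (by positivity) hgapA
  have hRnonneg : ∀ l, 0 ≤ R l := by
    intro l
    rw [hR l, hA l]
    exact mul_nonneg (by positivity) (tsum_nonneg fun k => by positivity)
  -- r 0
  have hr0 : r 0 = ∑' k:ℕ, a k^2 := by
    rw [hr 0]
    exact tsum_congr fun k => by norm_num
  have hr0pos : 0 < r 0 := by rw [hr0, ← hA0]; exact hA0pos
  have hr0R : r 0 = R 0 := by rw [hr0, hR 0, hA0]; norm_num
  -- the key Taylor bound on r
  obtain ⟨K, hK⟩ : ∃ K : ℝ, K = (2*π/L)^6 * (∑' k:ℕ, (k:ℝ)^6 * a k^2) / 720 := ⟨_, rfl⟩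
  have hKnonneg : 0 ≤ K := by
    rw [hK]
    have : 0 ≤ ∑' k:ℕ, (k:ℝ)^6 * a k^2 := tsum_nonneg fun k => by positivity
    positivity
  have hw : ∀ δ:ℝ, |(r 0 - r δ) - R 1*δ^2/2 + R 2*δ^4/24| ≤ K * δ^6 := by
    intro δ
    have hcossum : Summable (fun k:ℕ => a k^2 * Real.cos (2*π*k*δ/L)) := by
      refine Summable.of_norm_bounded hs0 (fun k => ?_)
      rw [Real.norm_eq_abs, abs_mul, abs_of_nonneg (sq_nonneg _)]
      exact mul_le_of_le_one_right (sq_nonneg _) (Real.abs_cos_le_one _)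
    obtain ⟨g, hg⟩ : ∃ g : ℕ → ℝ, ∀ k : ℕ, g k = a k^2 *
        ((1 - Real.cos (2*π*k*δ/L)) - (2*π*k*δ/L)^2/2 + (2*π*k*δ/L)^4/24) :=
      ⟨_, fun k => rfl⟩
    have hgle : ∀ k, |g k| ≤ (2*π/L)^6*δ^6/720 * ((k:ℝ)^6 * a k^2) := by
      intro k
      have h1 : |g k| = a k^2 *
          |Real.cos (2*π*k*δ/L) - (1 - (2*π*k*δ/L)^2/2 + (2*π*k*δ/L)^4/24)| := by
        rw [hg k]
        rw [show a k^2 * ((1 - Real.cos (2*π*k*δ/L)) - (2*π*k*δ/L)^2/2 + (2*π*k*δ/L)^4/24)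
          = a k^2 * -(Real.cos (2*π*↑k*δ/L)
            - (1 - (2*π*↑k*δ/L)^2/2 + (2*π*↑k*δ/L)^4/24)) from by ring]
        rw [abs_mul, abs_neg, abs_of_nonneg (sq_nonneg _)]
      rw [h1]
      calc a k^2 * |Real.cos (2*π*k*δ/L) - (1 - (2*π*k*δ/L)^2/2 + (2*π*k*δ/L)^4/24)|
          ≤ a k^2 * ((2*π*k*δ/L)^6/720) :=
            mul_le_mul_of_nonneg_left (cos_taylor_bound _) (sq_nonneg _)
        _ = (2*π/L)^6*δ^6/720 * ((k:ℝ)^6 * a k^2) := by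
            field_simp
    have hb : Summable (fun k:ℕ => (2*π/L)^6*δ^6/720 * ((k:ℝ)^6*a k^2)) := hs6.mul_left _
    have hgsummable : Summable g :=
      Summable.of_norm_bounded hb (fun k => by rw [Real.norm_eq_abs]; exact hgle k)
    have hgeq : ∑' k, g k = (r 0 - r δ) - R 1*δ^2/2 + R 2*δ^4/24 := by
      have e : ∀ k:ℕ, g k = ((a k^2 - a k^2 * Real.cos (2*π*k*δ/L))
          - (2*π/L)^2*δ^2/2 * ((k:ℝ)^2*a k^2)) + (2*π/L)^4*δ^4/24 * ((k:ℝ)^4*a k^2) := by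
        intro k
        rw [hg k]
        field_simp
      rw [tsum_congr e,
        Summable.tsum_add ((hs0.sub hcossum).sub (hs2.mul_left _)) (hs4.mul_left _),
        Summable.tsum_sub (hs0.sub hcossum) (hs2.mul_left _), Summable.tsum_sub hs0 hcossum,
        tsum_mul_left, tsum_mul_left, ← hr0, ← hr δ, ← hA1, ← hA2]
      have e1 : R 1 = (2*π/L)^2 * A 1 := by rw [hR 1]
      have e2 : R 2 = (2*π/L)^4 * A 2 := by rw [hR 2]
      rw [e1, e2]; ring
    rw [← hgeq]
    have habs : Summable (fun k : ℕ => |g k|) := hgsummable.abs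
    have hnorm : Summable (fun k : ℕ => ‖g k‖) := by
      simpa only [Real.norm_eq_abs] using habs
    calc |∑' k, g k| ≤ ∑' k:ℕ, |g k| := by
          simpa only [Real.norm_eq_abs] using norm_tsum_le_tsum_norm hnorm
      _ ≤ ∑' k:ℕ, (2*π/L)^6*δ^6/720 * ((k:ℝ)^6*a k^2) :=
          Summable.tsum_le_tsum hgle habs hb
      _ = (2*π/L)^6*δ^6/720 * ∑' k:ℕ, (k:ℝ)^6*a k^2 := tsum_mul_left
      _ = K * δ^6 := by rw [hK]; ring
  -- determinant identity
  have hdet_eq : ∀ δ:ℝ, (C δ).det = (r 0 - r δ) *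
      (4*r 0*(r 0 - r (δ/2)) - 2*(r 0 - r (δ/2))^2 - r 0*(r 0 - r δ)) := by
    intro δ
    rw [hC δ, Matrix.det_fin_three]
    simp [Matrix.cons_val_zero, Matrix.cons_val_one, Matrix.head_cons]
    ring
  -- Big-O machinery
  have hpow : ∀ m n : ℕ, n ≤ m →
      (fun δ:ℝ => δ^m) =O[𝓝[>](0:ℝ)] (fun δ => δ^n) := by
    intro m n h
    rcases eq_or_lt_of_le h with rfl | h
    · exact isBigO_refl _ _
    · exact ((isLittleO_pow_pow h).isBigO.mono nhdsWithin_le_nhds)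
  have hconst : ∀ (α:ℝ) (m n:ℕ), n ≤ m →
      (fun δ:ℝ => α*δ^m) =O[𝓝[>](0:ℝ)] (fun δ => δ^n) :=
    fun α m n h => (hpow m n h).const_mul_left α
  have hWO : (fun δ:ℝ => (r 0 - r δ) - R 1*δ^2/2 + R 2*δ^4/24)
      =O[𝓝[>](0:ℝ)] (fun δ => δ^6) := by
    refine IsBigO.of_bound K (Eventually.of_forall fun δ => ?_)
    rw [Real.norm_eq_abs, Real.norm_eq_abs, abs_of_nonneg (by positivity : (0:ℝ) ≤ δ^6)]
    exact hw δ
  have hWbO : (fun δ:ℝ => (r 0 - r (δ/2)) - R 1*(δ/2)^2/2 + R 2*(δ/2)^4/24)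
      =O[𝓝[>](0:ℝ)] (fun δ => δ^6) := by
    refine IsBigO.of_bound K (Eventually.of_forall fun δ => ?_)
    rw [Real.norm_eq_abs, Real.norm_eq_abs, abs_of_nonneg (by positivity : (0:ℝ) ≤ δ^6)]
    have h6 : (0:ℝ) ≤ δ^6 := by positivity
    nlinarith [hw (δ/2), mul_nonneg hKnonneg h6]
  have hP : (fun δ:ℝ => R 1*δ^2/2 - R 2*δ^4/24) =O[𝓝[>](0:ℝ)] (fun δ => δ^2) := by
    refine (((hconst (R 1/2) 2 2 le_rfl).sub (hconst (R 2/24) 4 2 (by norm_num)))).congr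
      (fun x => by ring) (fun x => rfl)
  have hPb : (fun δ:ℝ => R 1*(δ/2)^2/2 - R 2*(δ/2)^4/24) =O[𝓝[>](0:ℝ)] (fun δ => δ^2) := by
    refine (((hconst (R 1/8) 2 2 le_rfl).sub (hconst (R 2/384) 4 2 (by norm_num)))).congr
      (fun x => by ring) (fun x => rfl)
  have hq : (fun δ:ℝ => r 0 - r δ) =O[𝓝[>](0:ℝ)] (fun δ => δ^2) := by
    refine ((hWO.trans (hpow 6 2 (by norm_num))).add hP).congr (fun x => by ring) (fun x => rfl)
  have hqb : (fun δ:ℝ => r 0 - r (δ/2)) =O[𝓝[>](0:ℝ)] (fun δ => δ^2) := by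
    refine ((hWbO.trans (hpow 6 2 (by norm_num))).add hPb).congr (fun x => by ring) (fun x => rfl)
  have hqb2 : (fun δ:ℝ => (r 0 - r (δ/2))^2) =O[𝓝[>](0:ℝ)] (fun δ => δ^4) :=
    (hqb.mul hqb).congr (fun x => by ring) (fun x => by ring)
  have hB : (fun δ:ℝ => 4*r 0*(r 0 - r (δ/2)) - 2*(r 0 - r (δ/2))^2 - r 0*(r 0 - r δ))
      =O[𝓝[>](0:ℝ)] (fun δ => δ^2) :=
    ((hqb.const_mul_left (4*r 0)).sub
      ((hqb2.trans (hpow 4 2 (by norm_num))).const_mul_left 2)).sub (hq.const_mul_left (r 0))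
  have hpiece2 : (fun δ:ℝ => ((r 0 - r δ) - R 1*δ^2/2 + R 2*δ^4/24) *
      (4*r 0*(r 0 - r (δ/2)) - 2*(r 0 - r (δ/2))^2 - r 0*(r 0 - r δ)))
      =O[𝓝[>](0:ℝ)] (fun δ => δ^8) :=
    (hWO.mul hB).congr (fun x => rfl) (fun x => by ring)
  have hE : (fun δ:ℝ => 4*r 0*((r 0 - r (δ/2)) - R 1*(δ/2)^2/2 + R 2*(δ/2)^4/24)
      - r 0*((r 0 - r δ) - R 1*δ^2/2 + R 2*δ^4/24)
      - 2*((r 0 - r (δ/2)) + (R 1*(δ/2)^2/2 - R 2*(δ/2)^4/24))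
        * ((r 0 - r (δ/2)) - R 1*(δ/2)^2/2 + R 2*(δ/2)^4/24))
      =O[𝓝[>](0:ℝ)] (fun δ => δ^6) := by
    refine ((hWbO.const_mul_left (4*r 0)).sub (hWO.const_mul_left (r 0))).sub ?_
    refine ((((hqb.add hPb).mul hWbO).congr (fun x => rfl) (fun x => by ring)).trans
      (hpow 8 6 (by norm_num))).const_mul_left 2 |>.congr (fun x => by ring) (fun x => rfl)
  have hpiece3 : (fun δ:ℝ => (R 1*δ^2/2 - R 2*δ^4/24) *
      (4*r 0*((r 0 - r (δ/2)) - R 1*(δ/2)^2/2 + R 2*(δ/2)^4/24)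
      - r 0*((r 0 - r δ) - R 1*δ^2/2 + R 2*δ^4/24)
      - 2*((r 0 - r (δ/2)) + (R 1*(δ/2)^2/2 - R 2*(δ/2)^4/24))
        * ((r 0 - r (δ/2)) - R 1*(δ/2)^2/2 + R 2*(δ/2)^4/24)))
      =O[𝓝[>](0:ℝ)] (fun δ => δ^8) :=
    (hP.mul hE).congr (fun x => rfl) (fun x => by ring)
  have hone : ∀ (α:ℝ) (m:ℕ), (fun _:ℝ => α) =O[𝓝[>](0:ℝ)] (fun _ => (1:ℝ)) := by
    intro α m
    exact isBigO_const_const α one_ne_zero _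
  have hgpoly : (fun δ:ℝ => R 1^2*R 2/512 - R 0*R 2^2/768 - R 1*R 2^2/16384*δ^2
      + R 2^3/1769472*δ^4) =O[𝓝[>](0:ℝ)] (fun _ => (1:ℝ)) := by
    have h2 : (fun δ:ℝ => R 1*R 2^2/16384*δ^2) =O[𝓝[>](0:ℝ)] (fun _ => (1:ℝ)) :=
      (hconst (R 1*R 2^2/16384) 2 0 (by norm_num)).congr (fun x => rfl) (fun x => by norm_num)
    have h4 : (fun δ:ℝ => R 2^3/1769472*δ^4) =O[𝓝[>](0:ℝ)] (fun _ => (1:ℝ)) :=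
      (hconst (R 2^3/1769472) 4 0 (by norm_num)).congr (fun x => rfl) (fun x => by norm_num)
    exact ((hone (R 1^2*R 2/512 - R 0*R 2^2/768) 0).sub h2).add h4 |>.congr
      (fun x => by ring) (fun x => rfl)
  have hpiece1 : (fun δ:ℝ => δ^8 * (R 1^2*R 2/512 - R 0*R 2^2/768 - R 1*R 2^2/16384*δ^2
      + R 2^3/1769472*δ^4)) =O[𝓝[>](0:ℝ)] (fun δ => δ^8) :=
    ((isBigO_refl (fun δ:ℝ => δ^8) _).mul hgpoly).congr (fun x => rfl) (fun x => by ring)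
  have part1 : (fun δ => (C δ).det - R 1 / 64 * (R 0 * R 2 - R 1 ^ 2) * δ ^ 6)
      =O[𝓝[>] (0 : ℝ)] (fun δ => δ ^ 8) := by
    refine (((hpiece1.add hpiece2).add hpiece3).congr (fun δ => ?_) (fun δ => rfl))
    rw [hdet_eq δ, hr0R]
    ring
  refine ⟨part1, ?_⟩
  -- positive definiteness
  obtain ⟨Cb, hCb⟩ := part1.bound
  obtain ⟨T, hT⟩ : ∃ T : ℝ, T = R 1 / 64 * (R 0 * R 2 - R 1 ^ 2) := ⟨_, rfl⟩
  have hTpos : 0 < T := by rw [hT]; exact mul_pos (by positivity) hgap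
  rw [← hT] at hCb
  clear part1 hpiece1 hpiece2 hpiece3 hE hB hgpoly hone hWO hWbO hP hPb hq hqb hqb2 hpow hconst
  obtain ⟨M, hM⟩ : ∃ M : ℝ, M = R 2/24 + K := ⟨_, rfl⟩
  have hMnonneg : 0 ≤ M := by rw [hM]; have := hRnonneg 2; linarith
  obtain ⟨N, hN⟩ : ∃ N : ℝ, N = R 1/2 + M := ⟨_, rfl⟩
  have hNpos : 0 < N := by rw [hN]; linarith
  obtain ⟨Cb', hCb'⟩ : ∃ c : ℝ, c = max Cb 0 := ⟨_, rfl⟩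
  have hCb'nonneg : 0 ≤ Cb' := by rw [hCb']; exact le_max_right _ _
  have hCble : Cb ≤ Cb' := by rw [hCb']; exact le_max_left _ _
  obtain ⟨ε, hε⟩ : ∃ e : ℝ, e = min (min 1 (R 1/(2*(M+1)))) (min (2*(r 0)/(N+1)) (T/(Cb'+1)))
    := ⟨_, rfl⟩
  have hM1 : (0:ℝ) < 2*(M+1) := by linarith
  have hN1 : (0:ℝ) < N+1 := by linarith
  have hCb1 : (0:ℝ) < Cb'+1 := by linarith
  have hr02 : (0:ℝ) < 2*(r 0) := by linarith
  have hεpos : 0 < ε := by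
    rw [hε]
    exact lt_min (lt_min one_pos (div_pos hR1pos hM1))
      (lt_min (div_pos hr02 hN1) (div_pos hTpos hCb1))
  -- generic bound for small y
  have hqy : ∀ y:ℝ, 0 < y → y < ε → 0 < r 0 - r y ∧ r 0 - r y < 2 * r 0 := by
    intro y hy hyε
    have hyε' : y < min (min 1 (R 1/(2*(M+1)))) (min (2*(r 0)/(N+1)) (T/(Cb'+1))) := hε ▸ hyε
    have hy1 : y ≤ 1 := le_of_lt (lt_of_lt_of_le hyε' (le_trans (min_le_left _ _) (min_le_left _ _)))
    have hyR1 : y < R 1/(2*(M+1)) :=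
      lt_of_lt_of_le hyε' (le_trans (min_le_left _ _) (min_le_right _ _))
    have hyN : y < 2*(r 0)/(N+1) :=
      lt_of_lt_of_le hyε' (le_trans (min_le_right _ _) (min_le_left _ _))
    have habs := abs_le.1 (hw y)
    have hy3 : 0 < y^3 := by positivity
    have hy2 : 0 < y^2 := by positivity
    have h43 : y^4 ≤ y^3 := pow_le_pow_of_le_one (le_of_lt hy) hy1 (by norm_num)
    have h63 : y^6 ≤ y^3 := pow_le_pow_of_le_one (le_of_lt hy) hy1 (by norm_num)
    have h32 : y^3 ≤ y^2 := pow_le_pow_of_le_one (le_of_lt hy) hy1 (by norm_num)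
    have h21 : y^2 ≤ y := by
      have h := mul_le_mul_of_nonneg_right hy1 hy.le
      rw [one_mul] at h
      calc y^2 = y*y := by ring
        _ ≤ y := h
    have hMy : M * y < R 1/2 := by
      rw [lt_div_iff₀ hM1] at hyR1
      linarith [hyR1]
    have hNy : N * y < 2 * r 0 := by
      rw [lt_div_iff₀ hN1] at hyN
      linarith [hyN]
    have hR2nn := hRnonneg 2
    have f2 : R 2/24*y^4 ≤ R 2/24*y^3 :=
      mul_le_mul_of_nonneg_left h43 (by linarith)
    have f3 : K*y^6 ≤ K*y^3 := mul_le_mul_of_nonneg_left h63 hKnonneg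
    have f4 : M*y^3 = R 2/24*y^3 + K*y^3 := by rw [hM]; ring
    have f5 : M*y*y^2 < R 1/2*y^2 := mul_lt_mul_of_pos_right hMy hy2
    have f5' : M*y*y^2 = M*y^3 := by ring
    constructor
    · linarith [habs.1, f2, f3, f4, f5, f5']
    · have f9 : 0 ≤ R 2/24*y^4 := mul_nonneg (by linarith) (by positivity)
      have f10 : K*y^3 ≤ K*y^2 := mul_le_mul_of_nonneg_left h32 hKnonneg
      have f11 : M*y^2 = R 2/24*y^2 + K*y^2 := by rw [hM]; ring
      have f12 : 0 ≤ R 2/24*y^2 := mul_nonneg (by linarith) (by positivity)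
      have f7 : N*y^2 = R 1/2*y^2 + M*y^2 := by rw [hN]; ring
      have f8 : N*y^2 ≤ N*y := by
        have h := mul_le_mul_of_nonneg_left h21 hNpos.le
        linarith [h]
      linarith [habs.2, f3, f9, f10, f11, f12, f7, f8, hNy]
  have hIoo : ∀ᶠ δ in 𝓝[>] (0:ℝ), δ ∈ Set.Ioo 0 ε :=
    Ioo_mem_nhdsGT_of_mem ⟨le_refl 0, hεpos⟩
  filter_upwards [hIoo, hCb] with δ hδ hbd
  obtain ⟨hδ0, hδε⟩ := hδ
  have hδhalf : 0 < δ/2 := by linarith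
  have hδhalfε : δ/2 < ε := by linarith
  obtain ⟨hqb0, hqb2c⟩ := hqy (δ/2) hδhalf hδhalfε
  -- determinant positivity
  have hdetδ : 0 < (C δ).det := by
    have h1 : |(C δ).det - T*δ^6| ≤ Cb' * δ^8 := by
      rw [Real.norm_eq_abs, Real.norm_eq_abs, abs_of_nonneg (by positivity : (0:ℝ) ≤ δ^8)] at hbd
      calc |(C δ).det - T*δ^6|
          ≤ Cb * δ^8 := hbd
        _ ≤ Cb' * δ^8 := mul_le_mul_of_nonneg_right hCble (by positivity)
    have hδε' : δ < min (min 1 (R 1/(2*(M+1)))) (min (2*(r 0)/(N+1)) (T/(Cb'+1))) := hε ▸ hδε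
    have hδT : δ < T/(Cb'+1) :=
      lt_of_lt_of_le hδε' (le_trans (min_le_right _ _) (min_le_right _ _))
    have hδ1 : δ ≤ 1 :=
      le_of_lt (lt_of_lt_of_le hδε' (le_trans (min_le_left _ _) (min_le_left _ _)))
    have h6 : 0 < δ^6 := by positivity
    have h2 : δ^2 ≤ δ := by
      have h := mul_le_mul_of_nonneg_right hδ1 hδ0.le
      rw [one_mul] at h
      calc δ^2 = δ*δ := by ring
        _ ≤ δ := h
    rw [lt_div_iff₀ hCb1] at hδT
    have habs := abs_le.1 h1
    have g2 : Cb'*δ^2 ≤ Cb'*δ := mul_le_mul_of_nonneg_left h2 hCb'nonneg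
    have g3 : Cb'*δ^2*δ^6 ≤ Cb'*δ*δ^6 := mul_le_mul_of_nonneg_right g2 h6.le
    have g3' : Cb'*δ^2*δ^6 = Cb'*δ^8 := by ring
    have g4 : Cb'*δ < T := by linarith [hδT]
    have g5 : Cb'*δ*δ^6 < T*δ^6 := mul_lt_mul_of_pos_right g4 h6
    linarith [habs.1, g3, g3', g5]
  have hdetδ' : 0 < (r 0)^3 - 2*(r 0)*(r (δ/2))^2 + 2*(r δ)*(r (δ/2))^2 - (r 0)*(r δ)^2 := by
    have e : (C δ).det = (r 0)^3 - 2*(r 0)*(r (δ/2))^2 + 2*(r δ)*(r (δ/2))^2 - (r 0)*(r δ)^2 := by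
      rw [hdet_eq δ]; ring
    rw [← e]; exact hdetδ
  have hm2 : (r (δ/2))^2 < (r 0)^2 := by nlinarith
  constructor
  · -- Hermitian
    rw [hC δ]
    ext i j
    fin_cases i <;> fin_cases j <;>
      simp [Matrix.conjTranspose_apply]
  · intro x hx
    have hxor : x 0 ≠ 0 ∨ x 1 ≠ 0 ∨ x 2 ≠ 0 := by
      by_contra h
      push_neg at h
      obtain ⟨h0, h1, h2⟩ := h
      apply hx
      ext i
      fin_cases i <;> simp [h0, h1, h2]
    have key := posdef_quadratic_aux (u := x 0) (v := x 1) (z := x 2)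
      hr0pos hm2 hdetδ' hxor
    have e : dotProduct (star x) (Matrix.mulVec (C δ) x)
        = r 0*(x 0)^2 + r 0*(x 1)^2 + r 0*(x 2)^2 + 2*(r (δ/2))*(x 0)*(x 1)
          + 2*(r (δ/2))*(x 1)*(x 2) + 2*(r δ)*(x 0)*(x 2) := by
      rw [hC δ]
      simp [dotProduct, Matrix.mulVec, Fin.sum_univ_three]
      ring
    have e0 : (x.sum fun i xi => x.sum fun j xj => star xi * C δ i j * xj)
        = dotProduct (star ⇑x) (Matrix.mulVec (C δ) ⇑x) := by
      simp [dotProduct, Matrix.mulVec, Finsupp.sum_fintype, Finset.mul_sum, mul_assoc]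
    rw [e0, e]
    exact key
end

section
/- Let L > 0 and let (a_k)_{k≥0} be real numbers with Σ_k k⁸·a_k² < ∞ such that at least two of the a_k are nonzero. Define r(δ) = Σ_{k≥0} a_k²·cos(2πkδ/L) and for δ > 0 let C(δ) be the symmetric 3×3 matrix with rows (r(0), r(δ/2), r(δ)), (r(δ/2), r(0), r(δ/2)), (r(δ), r(δ/2), r(0)). Then for all sufficiently small δ > 0 the smallest eigenvalue λ₁(δ) of C(δ) is simple, and there is a choice of unit eigenvector v₁(δ) of C(δ) for λ₁(δ) such that v₁(δ) → (1,−2,1)ᵗ/√6 as δ → 0⁺. -/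
open Real Filter Topology


lemma sin_cubic_lb {x : ℝ} (hx : 0 ≤ x) : x - x ^ 3 / 6 ≤ Real.sin x := by
  have hd : ∀ y : ℝ, HasDerivAt (fun y => Real.sin y - (y - y ^ 3 / 6))
      (Real.cos y - (1 - y ^ 2 / 2)) y := by
    intro y
    have h1 := (Real.hasDerivAt_sin y).sub
      ((hasDerivAt_id y).sub ((hasDerivAt_pow 3 y).div_const 6))
    exact h1.congr_deriv (by norm_num; ring)
  have hmono : MonotoneOn (fun y => Real.sin y - (y - y ^ 3 / 6)) (Set.Ici (0:ℝ)) := by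
    apply monotoneOn_of_deriv_nonneg (convex_Ici 0)
    · exact Continuous.continuousOn (by continuity)
    · intro y _
      exact (hd y).differentiableAt.differentiableWithinAt
    · intro y _
      rw [(hd y).deriv]
      have := Real.one_sub_sq_div_two_le_cos (x := y)
      linarith
  have h0 : (fun y => Real.sin y - (y - y ^ 3 / 6)) 0 ≤
      (fun y => Real.sin y - (y - y ^ 3 / 6)) x :=
    hmono (Set.self_mem_Ici) hx hx
  simp at h0
  linarith

lemma cos_quartic_ub {x : ℝ} (hx : 0 ≤ x) :
    Real.cos x ≤ 1 - x ^ 2 / 2 + x ^ 4 / 24 := by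
  have hd : ∀ y : ℝ, HasDerivAt (fun y => (1 - y ^ 2 / 2 + y ^ 4 / 24) - Real.cos y)
      (Real.sin y - (y - y ^ 3 / 6)) y := by
    intro y
    have h1 := (((hasDerivAt_const y (1:ℝ)).sub ((hasDerivAt_pow 2 y).div_const 2)).add
      ((hasDerivAt_pow 4 y).div_const 24)).sub (Real.hasDerivAt_cos y)
    exact h1.congr_deriv (by norm_num; ring)
  have hmono : MonotoneOn (fun y => (1 - y ^ 2 / 2 + y ^ 4 / 24) - Real.cos y)
      (Set.Ici (0:ℝ)) := by
    apply monotoneOn_of_deriv_nonneg (convex_Ici 0)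
    · exact Continuous.continuousOn (by continuity)
    · intro y _
      exact (hd y).differentiableAt.differentiableWithinAt
    · intro y hy
      rw [(hd y).deriv]
      have := sin_cubic_lb (le_of_lt (by simpa using hy) : (0:ℝ) ≤ y)
      linarith [sin_cubic_lb (show (0:ℝ) ≤ y from le_of_lt (by simpa using hy))]
  have h0 := hmono (Set.self_mem_Ici) hx hx
  simp at h0
  linarith
set_option maxHeartbeats 1600000 in

/-- **Eigenvector asymptotics.** For the covariance matrix `C(δ)` of
`(u(x), u(x+δ/2), u(x+δ))` for a random `L`-periodic function with covariance function
`r`, for all sufficiently small `δ > 0` the smallest eigenvalue `λ₁(δ)` of `C(δ)` is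
simple, and one may choose a unit eigenvector `v₁(δ)` for `λ₁(δ)` with
`v₁(δ) → (1, −2, 1)ᵗ/√6` as `δ → 0⁺`. -/
theorem covariance_eigenvector_asymptotics (L : ℝ) (hL : 0 < L) (a : ℕ → ℝ)
    (hsum : Summable fun k : ℕ => (k : ℝ) ^ 8 * a k ^ 2)
    (hnz : ∃ k₁ k₂ : ℕ, k₁ ≠ k₂ ∧ a k₁ ≠ 0 ∧ a k₂ ≠ 0)
    (r : ℝ → ℝ) (hr : ∀ δ, r δ = ∑' k : ℕ, a k ^ 2 * Real.cos (2 * π * k * δ / L))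
    (C : ℝ → Matrix (Fin 3) (Fin 3) ℝ)
    (hC : ∀ δ, C δ = !![r 0, r (δ / 2), r δ;
                       r (δ / 2), r 0, r (δ / 2);
                       r δ, r (δ / 2), r 0]) :
    ∃ δ₀ > (0 : ℝ), ∃ lam : ℝ → ℝ, ∃ v : ℝ → Fin 3 → ℝ,
      (∀ δ ∈ Set.Ioo 0 δ₀,
        (C δ).mulVec (v δ) = lam δ • v δ ∧
        v δ 0 ^ 2 + v δ 1 ^ 2 + v δ 2 ^ 2 = 1 ∧
        (∀ (μ : ℝ) (w : Fin 3 → ℝ), w ≠ 0 → (C δ).mulVec w = μ • w → lam δ ≤ μ) ∧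
        (∀ w : Fin 3 → ℝ, (C δ).mulVec w = lam δ • w → ∃ c : ℝ, w = c • v δ)) ∧
      Tendsto v (𝓝[>] (0 : ℝ))
        (𝓝 ![1 / Real.sqrt 6, -2 / Real.sqrt 6, 1 / Real.sqrt 6]) := by
  -- ## Setup
  have hπ : 0 < π := Real.pi_pos
  set s : ℝ := r 0 with hs_def
  set c2 : ℝ := ∑' k : ℕ, a k ^ 2 * (2 * π * k / L) ^ 2 with hc2_def
  set c4 : ℝ := ∑' k : ℕ, a k ^ 2 * (2 * π * k / L) ^ 4 with hc4_def
  -- ## Summability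
  have sum0 : Summable (fun k : ℕ => a k ^ 2) := by
    rw [← summable_nat_add_iff 1]
    apply Summable.of_nonneg_of_le (fun k => sq_nonneg _) (fun k => ?_)
      ((summable_nat_add_iff 1).2 hsum)
    have h1 : (1:ℝ) ≤ ((k+1 : ℕ) : ℝ) ^ 8 := by
      apply one_le_pow₀
      exact_mod_cast Nat.succ_le_succ (Nat.zero_le k)
    nlinarith [sq_nonneg (a (k+1))]
  have sum2 : Summable (fun k : ℕ => a k ^ 2 * (2 * π * k / L) ^ 2) := by
    apply Summable.of_nonneg_of_le (fun k => by positivity) (fun k => ?_)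
      (hsum.mul_left ((2 * π / L) ^ 2))
    have hk : ((k:ℝ)) ^ 2 ≤ (k:ℝ) ^ 8 := by
      rcases Nat.eq_zero_or_pos k with h | h
      · simp [h]
      · exact pow_le_pow_right₀ (by exact_mod_cast h) (by norm_num)
    have h1 : a k ^ 2 * (2 * π * ↑k / L) ^ 2 = (2 * π / L) ^ 2 * ((k:ℝ)^2 * a k ^ 2) := by
      field_simp
    rw [h1]
    have h2 : (k:ℝ) ^ 2 * a k ^ 2 ≤ (k:ℝ) ^ 8 * a k ^ 2 := by nlinarith [sq_nonneg (a k)]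
    nlinarith [sq_nonneg (2 * π / L), sq_nonneg (2*π/L), mul_le_mul_of_nonneg_left h2 (show (0:ℝ) ≤ (2*π/L)^2 by positivity)]
  have sum4 : Summable (fun k : ℕ => a k ^ 2 * (2 * π * k / L) ^ 4) := by
    apply Summable.of_nonneg_of_le (fun k => by positivity) (fun k => ?_)
      (hsum.mul_left ((2 * π / L) ^ 4))
    have hk : ((k:ℝ)) ^ 4 ≤ (k:ℝ) ^ 8 := by
      rcases Nat.eq_zero_or_pos k with h | h
      · simp [h]
      · exact pow_le_pow_right₀ (by exact_mod_cast h) (by norm_num)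
    have h1 : a k ^ 2 * (2 * π * ↑k / L) ^ 4 = (2 * π / L) ^ 4 * ((k:ℝ)^4 * a k ^ 2) := by
      field_simp
    rw [h1]
    have h2 : (k:ℝ) ^ 4 * a k ^ 2 ≤ (k:ℝ) ^ 8 * a k ^ 2 := by nlinarith [sq_nonneg (a k)]
    nlinarith [mul_le_mul_of_nonneg_left h2 (show (0:ℝ) ≤ (2*π/L)^4 by positivity)]
  have sumcos : ∀ t : ℝ, Summable (fun k : ℕ => a k ^ 2 * Real.cos (2 * π * k * t / L)) := by
    intro t
    apply Summable.of_norm_bounded sum0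
    intro k
    rw [Real.norm_eq_abs, abs_mul, abs_of_nonneg (sq_nonneg (a k))]
    nlinarith [Real.abs_cos_le_one (2 * π * k * t / L), sq_nonneg (a k),
      abs_nonneg (Real.cos (2 * π * k * t / L))]
  -- ## Basic facts about r and positivity of constants
  have hs_eq : s = ∑' k : ℕ, a k ^ 2 := by
    rw [hs_def, hr 0]
    apply tsum_congr
    intro k
    norm_num
  obtain ⟨k₁, k₂, hkne, ha1, ha2⟩ := hnz
  have hs_pos : 0 < s := by
    rw [hs_eq]
    exact Summable.tsum_pos sum0 (fun k => sq_nonneg _) k₁ (by positivity)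
  have hex : ∃ k : ℕ, 0 < k ∧ a k ≠ 0 := by
    rcases Nat.eq_zero_or_pos k₁ with h1 | h1
    · rcases Nat.eq_zero_or_pos k₂ with h2 | h2
      · exact absurd (h1.trans h2.symm) hkne
      · exact ⟨k₂, h2, ha2⟩
    · exact ⟨k₁, h1, ha1⟩
  have hc2_pos : 0 < c2 := by
    obtain ⟨k, hk, hak⟩ := hex
    rw [hc2_def]
    apply Summable.tsum_pos sum2 (fun k => by positivity) k
    have : 0 < (k:ℝ) := by exact_mod_cast hk
    positivity
  have hc4_pos : 0 < c4 := by
    obtain ⟨k, hk, hak⟩ := hex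
    rw [hc4_def]
    apply Summable.tsum_pos sum4 (fun k => by positivity) k
    have : 0 < (k:ℝ) := by exact_mod_cast hk
    positivity
  -- difference formula and two-sided bounds
  have sumdiff : ∀ t : ℝ, Summable (fun k : ℕ => a k ^ 2 * (1 - Real.cos (2 * π * k * t / L))) :=
    fun t => (sum0.sub (sumcos t)).congr (fun k => by ring)
  have hdiff : ∀ t : ℝ, s - r t = ∑' k : ℕ, a k ^ 2 * (1 - Real.cos (2 * π * k * t / L)) := by
    intro t
    rw [hs_eq, hr t]
    rw [show (∑' k : ℕ, a k ^ 2 * (1 - Real.cos (2 * π * k * t / L)))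
        = ∑' k : ℕ, (a k ^ 2 - a k ^ 2 * Real.cos (2 * π * k * t / L)) from
      tsum_congr (fun k => by ring)]
    rw [Summable.tsum_sub sum0 (sumcos t)]
  have hrub : ∀ t : ℝ, r t ≤ s := by
    intro t
    have h : 0 ≤ s - r t := by
      rw [hdiff t]
      apply tsum_nonneg
      intro k
      have := Real.cos_le_one (2 * π * k * t / L)
      nlinarith [sq_nonneg (a k)]
    linarith
  have hrlb : ∀ t : ℝ, s - c2 * t ^ 2 / 2 ≤ r t := by
    intro t
    have h : s - r t ≤ c2 * (t ^ 2 / 2) := by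
      rw [hdiff t, hc2_def, ← tsum_mul_right]
      apply Summable.tsum_le_tsum _ (sumdiff t) (sum2.mul_right _)
      intro k
      have hcos := Real.one_sub_sq_div_two_le_cos (x := 2 * π * k * t / L)
      have harg : (2 * π * k * t / L) ^ 2 = (2 * π * k / L) ^ 2 * t ^ 2 := by
        field_simp
      nlinarith [sq_nonneg (a k)]
    linarith
  -- ## Key gap estimate: r δ < r (δ/2) for small δ
  have hgap : ∀ δ : ℝ, 0 < δ → c4 * δ ^ 2 ≤ c2 → r δ < r (δ / 2) := by
    intro δ hδ hδ2
    set B : ℝ := ∑' k : ℕ, a k ^ 2 * (1 - Real.cos (2 * π * k * (δ/2) / L)) ^ 2 with hB_def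
    have sumB : Summable (fun k : ℕ =>
        a k ^ 2 * (1 - Real.cos (2 * π * k * (δ/2) / L)) ^ 2) := by
      apply Summable.of_nonneg_of_le (fun k => by positivity) (fun k => ?_)
        (sum0.mul_left 4)
      have h1 := Real.cos_le_one (2 * π * k * (δ/2) / L)
      have h2 := Real.neg_one_le_cos (2 * π * k * (δ/2) / L)
      have h3 : (1 - Real.cos (2 * π * k * (δ/2) / L)) ^ 2 ≤ 4 := by nlinarith
      nlinarith [mul_le_mul_of_nonneg_left h3 (sq_nonneg (a k))]
    -- identity: s - r δ = 4 (s - r (δ/2)) - 2 B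
    have hiden : s - r δ = 4 * (s - r (δ/2)) - 2 * B := by
      rw [hdiff δ, hdiff (δ/2), hB_def, ← tsum_mul_left, ← tsum_mul_left,
        ← Summable.tsum_sub ((sumdiff (δ/2)).mul_left 4) (sumB.mul_left 2)]
      apply tsum_congr
      intro k
      rw [show 2*π*(k:ℝ)*δ/L = 2*(2*π*(k:ℝ)*(δ/2)/L) by ring, Real.cos_two_mul]
      ring
    -- lower bound for A = s - r (δ/2)
    have hA_lb : c2 * (δ^2/8) - c4 * (δ^4/384) ≤ s - r (δ/2) := by
      rw [hdiff (δ/2), hc2_def, hc4_def, ← tsum_mul_right, ← tsum_mul_right,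
        ← Summable.tsum_sub (sum2.mul_right _) (sum4.mul_right _)]
      apply Summable.tsum_le_tsum _ ((sum2.mul_right _).sub (sum4.mul_right _)) (sumdiff (δ/2))
      intro k
      have hx : (0:ℝ) ≤ 2*π*(k:ℝ)*(δ/2)/L := by positivity
      have hcos := cos_quartic_ub hx
      have e2 : (2*π*(k:ℝ)*(δ/2)/L)^2 = (2*π*(k:ℝ)/L)^2 * (δ^2/4) := by
        field_simp; ring
      have e4 : (2*π*(k:ℝ)*(δ/2)/L)^4 = (2*π*(k:ℝ)/L)^4 * (δ^4/16) := by
        field_simp; ring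
      have key : a k^2 * ((2*π*(k:ℝ)*(δ/2)/L)^2/2 - (2*π*(k:ℝ)*(δ/2)/L)^4/24)
          ≤ a k^2 * (1 - Real.cos (2*π*(k:ℝ)*(δ/2)/L)) := by
        nlinarith [sq_nonneg (a k)]
      have e : a k^2 * ((2*π*(k:ℝ)*(δ/2)/L)^2/2 - (2*π*(k:ℝ)*(δ/2)/L)^4/24)
          = a k^2 * (2*π*(k:ℝ)/L)^2 * (δ^2/8) - a k^2 * (2*π*(k:ℝ)/L)^4 * (δ^4/384) := by
        linear_combination (a k^2/2) * e2 - (a k^2/24) * e4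
      linarith
    -- upper bound for B
    have hB_ub : B ≤ c4 * (δ^4/64) := by
      rw [hB_def, hc4_def, ← tsum_mul_right]
      apply Summable.tsum_le_tsum _ sumB (sum4.mul_right _)
      intro k
      have h1 := Real.cos_le_one (2*π*(k:ℝ)*(δ/2)/L)
      have h2 := Real.one_sub_sq_div_two_le_cos (x := 2*π*(k:ℝ)*(δ/2)/L)
      have e4 : (2*π*(k:ℝ)*(δ/2)/L)^4 = (2*π*(k:ℝ)/L)^4 * (δ^4/16) := by
        field_simp; ring
      have hsq : (1 - Real.cos (2*π*(k:ℝ)*(δ/2)/L))^2 ≤ ((2*π*(k:ℝ)*(δ/2)/L)^2/2)^2 := by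
        nlinarith
      have h5 := mul_le_mul_of_nonneg_left hsq (sq_nonneg (a k))
      have e : a k^2 * (((2*π*(k:ℝ)*(δ/2)/L)^2/2)^2) = a k^2 * (2*π*(k:ℝ)/L)^4 * (δ^4/64) := by
        linear_combination (a k^2/4) * e4
      linarith
    -- conclude
    have hδ4 : c4 * δ^4 ≤ c2 * δ^2 := by nlinarith [sq_nonneg δ]
    have hc2δ : 0 < c2 * δ^2 := by positivity
    nlinarith
  -- ## Choice of δ₀ and the eigen-data
  set δ₀ : ℝ := min (Real.sqrt (s/(5*c2))) (Real.sqrt (c2/c4)) with hδ₀_def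
  have hδ₀_pos : 0 < δ₀ :=
    lt_min (Real.sqrt_pos.2 (by positivity)) (Real.sqrt_pos.2 (by positivity))
  set Sf : ℝ → ℝ := fun δ => Real.sqrt ((r δ)^2 + 8*(r (δ/2))^2) with hSf
  set lam : ℝ → ℝ := fun δ => (2*s + r δ - Sf δ)/2 with hlam
  set tt : ℝ → ℝ := fun δ => 2*(r (δ/2))/(lam δ - s) with htt
  set Nn : ℝ → ℝ := fun δ => Real.sqrt (2 + tt δ^2) with hNn
  set v : ℝ → Fin 3 → ℝ := fun δ => ![1/Nn δ, tt δ/Nn δ, 1/Nn δ] with hv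
  refine ⟨δ₀, hδ₀_pos, lam, v, fun δ hδ => ?_, ?_⟩
  · obtain ⟨hδpos, hδlt⟩ := hδ
    -- quantitative facts for this δ
    have hδ1 : δ^2 < s/(5*c2) := by
      have h := lt_of_lt_of_le hδlt (min_le_left _ _)
      have := (Real.lt_sqrt hδpos.le).mp h
      linarith
    have hδ2 : δ^2 ≤ c2/c4 := by
      have h := lt_of_lt_of_le hδlt (min_le_right _ _)
      exact le_of_lt ((Real.lt_sqrt hδpos.le).mp h)
    have hc2δ : c2 * δ^2 / 2 < s/10 := by
      rw [lt_div_iff₀ (by positivity : (0:ℝ) < 5*c2)] at hδ1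
      nlinarith
    have hγβ : r δ < r (δ/2) := by
      apply hgap δ hδpos
      rw [le_div_iff₀ hc4_pos] at hδ2
      nlinarith
    have hβ_lb : 9/10*s < r (δ/2) := by
      have h := hrlb (δ/2)
      nlinarith [sq_nonneg δ]
    have hγ_lb : 9/10*s < r δ := by
      have h := hrlb δ
      nlinarith
    have hβ_ub := hrub (δ/2)
    have hγ_ub := hrub δ
    have hβpos : 0 < r (δ/2) := by nlinarith
    have hγpos : 0 < r δ := by nlinarith
    -- the square root
    have hS2 : Sf δ^2 = (r δ)^2 + 8*(r (δ/2))^2 := by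
      rw [hSf]
      exact Real.sq_sqrt (by positivity)
    have hS_pos : 0 < Sf δ := by
      rw [hSf]
      exact Real.sqrt_pos.2 (by positivity)
    have hγS : r δ < Sf δ := by nlinarith
    have h3γS : 3*(r δ) < Sf δ := by nlinarith
    have hlam_lt_s : lam δ < s := by
      rw [hlam]
      dsimp only
      linarith
    have hlam_lt_mu : lam δ < s - r δ := by
      rw [hlam]
      dsimp only
      linarith
    have hlam_ne : lam δ - s ≠ 0 := sub_ne_zero.2 (ne_of_lt hlam_lt_s)
    have h2l : Sf δ = 2*s + r δ - 2*lam δ := by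
      rw [hlam]
      ring
    have hq : lam δ^2 - (2*s + r δ)*lam δ + (s^2 + s*(r δ) - 2*(r (δ/2))^2) = 0 := by
      have h := hS2
      rw [h2l] at h
      linear_combination (1/4) * h
    have ht_eq : (lam δ - s) * tt δ = 2*(r (δ/2)) := by
      rw [htt]
      field_simp
    have hrow2 : 2*(r (δ/2)) + s * tt δ = lam δ * tt δ := by linear_combination -ht_eq
    have hrow1 : s + (r (δ/2)) * tt δ + r δ = lam δ := by
      have hmul : (s + (r (δ/2)) * tt δ + r δ - lam δ) * (lam δ - s) = 0 := by
        linear_combination (r (δ/2)) * ht_eq - hq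
      rcases mul_eq_zero.mp hmul with h | h
      · linarith [sub_eq_zero.mp h]
      · exact absurd h hlam_ne
    have hN2 : Nn δ^2 = 2 + tt δ^2 := by
      rw [hNn]
      exact Real.sq_sqrt (by positivity)
    have hN_pos : 0 < Nn δ := by
      rw [hNn]
      exact Real.sqrt_pos.2 (by positivity)
    have hNne : Nn δ ≠ 0 := ne_of_gt hN_pos
    refine ⟨?_, ?_, ?_, ?_⟩
    -- eigen equation
    · rw [hC δ]
      funext i
      fin_cases i <;>
        simp [hv, Matrix.mulVec, dotProduct, Fin.sum_univ_three] <;>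
        field_simp <;>
        linarith [hrow1, hrow2]
    -- unit norm
    · rw [hv]
      dsimp only
      simp only [Matrix.cons_val_zero, Matrix.cons_val_one, Matrix.head_cons,
        Matrix.cons_val_two, Matrix.tail_cons]
      field_simp
      linarith [hN2]
    -- minimality
    · intro μ w hw hmw
      rw [hC δ] at hmw
      have e0 := congrFun hmw 0
      have e1 := congrFun hmw 1
      have e2 := congrFun hmw 2
      simp [Matrix.mulVec, dotProduct, Fin.sum_univ_three] at e0 e1 e2
      by_cases hμ : μ = s - r δ
      · rw [hμ]; linarith
      · have h02 : w 0 = w 2 := by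
          have hkey : (s - r δ - μ) * (w 0 - w 2) = 0 := by linear_combination e0 - e2
          rcases mul_eq_zero.mp hkey with h | h
          · exact absurd (by linarith) hμ
          · exact sub_eq_zero.mp h
        rw [← h02] at e0 e1
        have hw01 : w 0 ≠ 0 ∨ w 1 ≠ 0 := by
          by_contra hcon
          push_neg at hcon
          obtain ⟨h0, h1⟩ := hcon
          apply hw
          funext i
          fin_cases i
          · show w 0 = 0; exact h0
          · show w 1 = 0; exact h1
          · show w 2 = 0; rw [← h02]; exact h0
        have hdet : (s + r δ - μ)*(s - μ) - 2*(r (δ/2))^2 = 0 := by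
          rcases hw01 with h | h
          · have hd : ((s + r δ - μ)*(s - μ) - 2*(r (δ/2))^2) * w 0 = 0 := by
              linear_combination (s - μ) * e0 - (r (δ/2)) * e1
            exact (mul_eq_zero.mp hd).resolve_right h
          · have hd : ((s + r δ - μ)*(s - μ) - 2*(r (δ/2))^2) * w 1 = 0 := by
              linear_combination (-2*(r (δ/2))) * e0 + (s + r δ - μ) * e1
            exact (mul_eq_zero.mp hd).resolve_right h
        have hfact : (μ - lam δ)*(μ - (2*s + r δ - lam δ)) = 0 := by
          linear_combination hdet - hq
        rcases mul_eq_zero.mp hfact with h | h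
        · have := sub_eq_zero.mp h
          linarith [this.symm.le]
        · have := sub_eq_zero.mp h
          linarith [hS_pos]
    -- simplicity
    · intro w hmw
      rw [hC δ] at hmw
      have e0 := congrFun hmw 0
      have e1 := congrFun hmw 1
      have e2 := congrFun hmw 2
      simp [Matrix.mulVec, dotProduct, Fin.sum_univ_three] at e0 e1 e2
      have h02 : w 0 = w 2 := by
        have hkey : (s - r δ - lam δ) * (w 0 - w 2) = 0 := by linear_combination e0 - e2
        rcases mul_eq_zero.mp hkey with h | h
        · exact absurd h (by intro hh; linarith)
        · exact sub_eq_zero.mp h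
      rw [← h02] at e1
      have hw1 : w 1 = tt δ * w 0 := by
        apply mul_left_cancel₀ hlam_ne
        have h1 : (lam δ - s) * w 1 = 2*(r (δ/2)) * w 0 := by linear_combination -e1
        have h2 : (lam δ - s) * (tt δ * w 0) = 2*(r (δ/2)) * w 0 := by
          rw [← mul_assoc, ht_eq]
        rw [h1, h2]
      refine ⟨w 0 * Nn δ, ?_⟩
      funext i
      fin_cases i
      · show w 0 = (w 0 * Nn δ) • (v δ) 0
        rw [hv]
        simp [smul_eq_mul]
        field_simp
      · show w 1 = (w 0 * Nn δ) • (v δ) 1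
        rw [hv, hw1]
        simp [smul_eq_mul]
        field_simp
      · show w 2 = (w 0 * Nn δ) • (v δ) 2
        rw [hv, ← h02]
        simp [smul_eq_mul]
        field_simp
  -- ## the limit δ → 0⁺
  · have hrlim : Tendsto r (𝓝[>] (0:ℝ)) (𝓝 s) := by
      apply tendsto_of_tendsto_of_tendsto_of_le_of_le
        (g := fun t : ℝ => s - c2*t^2/2) (h := fun _ : ℝ => s)
      · have hc : Continuous (fun t : ℝ => s - c2*t^2/2) := by continuity
        have := (hc.tendsto 0).mono_left (nhdsWithin_le_nhds (s := Set.Ioi (0:ℝ)))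
        simpa using this
      · exact tendsto_const_nhds
      · exact fun t => hrlb t
      · exact fun t => hrub t
    have hhalf : Tendsto (fun δ : ℝ => δ/2) (𝓝[>] (0:ℝ)) (𝓝[>] (0:ℝ)) := by
      apply tendsto_nhdsWithin_of_tendsto_nhds_of_eventually_within
      · have := ((continuous_id.div_const (2:ℝ)).tendsto 0).mono_left
          (nhdsWithin_le_nhds (s := Set.Ioi (0:ℝ)))
        simpa using this
      · filter_upwards [self_mem_nhdsWithin] with x hx
        exact half_pos (Set.mem_Ioi.mp hx)
    have hβlim : Tendsto (fun δ => r (δ/2)) (𝓝[>] (0:ℝ)) (𝓝 s) := hrlim.comp hhalf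
    have hSlim : Tendsto Sf (𝓝[>] (0:ℝ)) (𝓝 (3*s)) := by
      have h1 : Tendsto (fun δ => (r δ)^2 + 8*(r (δ/2))^2) (𝓝[>] (0:ℝ)) (𝓝 (s^2 + 8*s^2)) :=
        (hrlim.pow 2).add ((hβlim.pow 2).const_mul 8)
      have h2 := h1.sqrt
      rw [show Real.sqrt (s^2+8*s^2) = 3*s by
        rw [show s^2+8*s^2 = (3*s)^2 by ring]
        exact Real.sqrt_sq (by positivity)] at h2
      exact h2
    have hlamlim : Tendsto lam (𝓝[>] (0:ℝ)) (𝓝 0) := by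
      have h := (((tendsto_const_nhds (x := 2*s) (f := 𝓝[>] (0:ℝ))).add hrlim).sub hSlim).div_const 2
      rw [show (2*s + s - 3*s)/2 = 0 by ring] at h
      exact h
    have htlim : Tendsto tt (𝓝[>] (0:ℝ)) (𝓝 (-2)) := by
      have h := (hβlim.const_mul 2).div (hlamlim.sub_const s)
        (by intro hh; rw [zero_sub, neg_eq_zero] at hh; exact (ne_of_gt hs_pos) hh)
      rw [show (2*s)/(0 - s) = -2 by
        rw [zero_sub, div_neg, mul_div_assoc, div_self (ne_of_gt hs_pos)]
        norm_num] at h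
      exact h
    have hNlim : Tendsto Nn (𝓝[>] (0:ℝ)) (𝓝 (Real.sqrt 6)) := by
      have h := ((tendsto_const_nhds (x := (2:ℝ)) (f := 𝓝[>] (0:ℝ))).add (htlim.pow 2)).sqrt
      rw [show (2:ℝ) + (-2)^2 = 6 by norm_num] at h
      exact h
    have hN6 : Real.sqrt 6 ≠ 0 := by positivity
    rw [tendsto_pi_nhds]
    intro i
    fin_cases i
    · simpa [hv, one_div] using hNlim.inv₀ hN6
    · simp [hv]; exact htlim.div hNlim hN6
    · simpa [hv, one_div] using hNlim.inv₀ hN6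
end

section
/- Let L > 0 and let (a_{k,ℓ})_{k,ℓ≥0} be real numbers with Σ_{k,ℓ} (k²+ℓ²)⁵·a_{k,ℓ}² < ∞, such that there exist indices with k₁,ℓ₁ ≥ 1 and a_{k₁,ℓ₁} ≠ 0 (so that A_{1,1} > 0). Define r(d₁,d₂) = Σ_{k,ℓ≥0} a_{k,ℓ}²·cos(2πkd₁/L)·cos(2πℓd₂/L), A_{p,q} = Σ_{k,ℓ≥0} k^{2p}·ℓ^{2q}·a_{k,ℓ}², and R_{p,q} = (2π/L)^{2p+2q}·A_{p,q}. For δ > 0 let C(δ) be the 4×4 matrix with entries C(δ)_{ij} = r(P_i − P_j), where P₁ = (0,0), P₂ = (δ,0), P₃ = (δ,δ), P₄ = (0,δ). Then as δ → 0⁺, det C(δ) = R_{0,0}·R_{0,1}·R_{1,0}·R_{1,1}·δ⁸ + O(δ⁹), and the smallest eigenvalue of C(δ) satisfies λ₁(δ) = (R_{1,1}/4)·δ⁴ + O(δ⁵), while the largest eigenvalue satisfies λ₄(δ) = 4·R_{0,0} + O(δ); moreover there is a choice of unit eigenvector v₁(δ) for λ₁(δ) with v₁(δ) → (1,−1,1,−1)ᵗ/2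 as δ → 0⁺. -/
open Real Filter Topology Asymptotics
set_option maxHeartbeats 1600000000

section Aux
open intervalIntegral

lemma aux_sin_ge {u : ℝ} (h : 0 ≤ u) : u - u ^ 3 / 6 ≤ Real.sin u := by
  have key : ∀ s ∈ Set.Icc (0:ℝ) u, 1 - s ^ 2 / 2 ≤ Real.cos s := fun s _ =>
    Real.one_sub_sq_div_two_le_cos
  have h1 : (∫ s in (0:ℝ)..u, (1 - s ^ 2 / 2)) ≤ ∫ s in (0:ℝ)..u, Real.cos s := by
    apply intervalIntegral.integral_mono_on h ?_ ?_ key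
    · exact (continuous_const.sub ((continuous_pow 2).div_const 2)).intervalIntegrable _ _
    · exact Real.continuous_cos.intervalIntegrable _ _
  have h2 : (∫ s in (0:ℝ)..u, (1 - s ^ 2 / 2)) = u - u ^ 3 / 6 := by
    rw [intervalIntegral.integral_sub (intervalIntegrable_const)
      (((continuous_pow 2).div_const 2).intervalIntegrable _ _)]
    simp [intervalIntegral.integral_div, integral_pow]
    ring
  rw [integral_cos] at h1
  simp at h1
  linarith

lemma aux_cos_le {t : ℝ} (h : 0 ≤ t) : Real.cos t ≤ 1 - t ^ 2 / 2 + t ^ 4 / 24 := by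
  have key : ∀ s ∈ Set.Icc (0:ℝ) t, s - s ^ 3 / 6 ≤ Real.sin s := fun s hs => aux_sin_ge hs.1
  have h1 : (∫ s in (0:ℝ)..t, (s - s ^ 3 / 6)) ≤ ∫ s in (0:ℝ)..t, Real.sin s := by
    apply intervalIntegral.integral_mono_on h ?_ ?_ key
    · exact (continuous_id.sub ((continuous_pow 3).div_const 6)).intervalIntegrable _ _
    · exact Real.continuous_sin.intervalIntegrable _ _
  have h2 : (∫ s in (0:ℝ)..t, (s - s ^ 3 / 6)) = t ^ 2 / 2 - t ^ 4 / 24 := by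
    rw [intervalIntegral.integral_sub (intervalIntegral.intervalIntegrable_id)
      (((continuous_pow 3).div_const 6).intervalIntegrable _ _)]
    simp [intervalIntegral.integral_div, integral_pow, integral_id]
    ring
  rw [integral_sin] at h1
  simp at h1
  linarith


lemma cos_facts {x : ℝ} (hx : 0 ≤ x) :
    0 ≤ x ^ 2 / 2 - (1 - Real.cos x) ∧ x ^ 2 / 2 - (1 - Real.cos x) ≤ x ^ 4 / 24 ∧
    0 ≤ 1 - Real.cos x ∧ 1 - Real.cos x ≤ 2 := by
  have h1 := Real.one_sub_sq_div_two_le_cos (x := x)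
  have h2 := aux_cos_le hx
  have h3 := Real.cos_le_one x
  have h4 := Real.neg_one_le_cos x
  refine ⟨by linarith, by linarith, by linarith, by linarith⟩

lemma termS {x y : ℝ} (hx : 0 ≤ x) (hy : 0 ≤ y) :
    |(1 - Real.cos x) * (1 - Real.cos y) - x ^ 2 * y ^ 2 / 4| ≤
      x ^ 2 * y ^ 4 / 48 + x ^ 4 * y ^ 2 / 48 + x ^ 4 * y ^ 4 / 576 := by
  obtain ⟨hx1, hx2, hx3, hx4⟩ := cos_facts hx
  obtain ⟨hy1, hy2, hy3, hy4⟩ := cos_facts hy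
  set Ex := x ^ 2 / 2 - (1 - Real.cos x) with hEx
  set Ey := y ^ 2 / 2 - (1 - Real.cos y) with hEy
  have hexp : (1 - Real.cos x) * (1 - Real.cos y) - x ^ 2 * y ^ 2 / 4 =
      Ex * Ey - x ^ 2 / 2 * Ey - y ^ 2 / 2 * Ex := by rw [hEx, hEy]; ring
  have p1 : Ex * Ey ≤ x ^ 4 / 24 * (y ^ 4 / 24) := mul_le_mul hx2 hy2 hy1 (by positivity)
  have p2 : x ^ 2 / 2 * Ey ≤ x ^ 2 / 2 * (y ^ 4 / 24) :=
    mul_le_mul_of_nonneg_left hy2 (by positivity)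
  have p3 : y ^ 2 / 2 * Ex ≤ y ^ 2 / 2 * (x ^ 4 / 24) :=
    mul_le_mul_of_nonneg_left hx2 (by positivity)
  have p4 : 0 ≤ Ex * Ey := mul_nonneg hx1 hy1
  have p5 : 0 ≤ x ^ 2 / 2 * Ey := mul_nonneg (by positivity) hy1
  have p6 : 0 ≤ y ^ 2 / 2 * Ex := mul_nonneg (by positivity) hx1
  rw [hexp, abs_le]
  constructor <;> nlinarith

lemma termB {x y : ℝ} (hx : 0 ≤ x) (hy : 0 ≤ y) :
    |(1 + Real.cos x) * (1 - Real.cos y) - y ^ 2| ≤ y ^ 4 / 12 + x ^ 2 * y ^ 2 / 4 := by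
  obtain ⟨hx1, hx2, hx3, hx4⟩ := cos_facts hx
  obtain ⟨hy1, hy2, hy3, hy4⟩ := cos_facts hy
  set Ey := y ^ 2 / 2 - (1 - Real.cos y) with hEy
  have hexp : (1 + Real.cos x) * (1 - Real.cos y) - y ^ 2 =
      -2 * Ey - (1 - Real.cos x) * (1 - Real.cos y) := by rw [hEy]; ring
  have p1 : (1 - Real.cos x) * (1 - Real.cos y) ≤ x ^ 2 / 2 * (y ^ 2 / 2) := by
    apply mul_le_mul (by linarith) (by linarith) hy3 (by positivity)
  have p2 : 0 ≤ (1 - Real.cos x) * (1 - Real.cos y) := mul_nonneg hx3 hy3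
  rw [hexp, abs_le]
  constructor <;> nlinarith

lemma termA {x y : ℝ} (hx : 0 ≤ x) (hy : 0 ≤ y) :
    |(1 + Real.cos x) * (1 + Real.cos y) - 4| ≤ x ^ 2 + y ^ 2 := by
  obtain ⟨hx1, hx2, hx3, hx4⟩ := cos_facts hx
  obtain ⟨hy1, hy2, hy3, hy4⟩ := cos_facts hy
  have hexp : (1 + Real.cos x) * (1 + Real.cos y) - 4 =
      -2 * (1 - Real.cos x) - 2 * (1 - Real.cos y) + (1 - Real.cos x) * (1 - Real.cos y) := by ring
  have p1 : (1 - Real.cos x) * (1 - Real.cos y) ≤ 2 * (1 - Real.cos y) :=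
    mul_le_mul_of_nonneg_right hx4 hy3
  have p2 : 0 ≤ (1 - Real.cos x) * (1 - Real.cos y) := mul_nonneg hx3 hy3
  rw [hexp, abs_le]
  constructor <;> nlinarith

lemma mul_approx {u u' v v' eu ev bu bv : ℝ} (h1 : |u - u'| ≤ eu) (h2 : |v - v'| ≤ ev)
    (h3 : |u'| ≤ bu) (h4 : |v| ≤ bv) : |u * v - u' * v'| ≤ eu * bv + bu * ev := by
  have hexp : u * v - u' * v' = (u - u') * v + u' * (v - v') := by ring
  rw [hexp]
  calc |(u - u') * v + u' * (v - v')| ≤ |(u - u') * v| + |u' * (v - v')| := abs_add_le _ _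
    _ = |u - u'| * |v| + |u'| * |v - v'| := by rw [abs_mul, abs_mul]
    _ ≤ eu * bv + bu * ev := by
        have := abs_nonneg (u - u')
        have := abs_nonneg v
        have := abs_nonneg u'
        have := abs_nonneg (v - v')
        gcongr <;> first | assumption | linarith

end Aux


/-- **Spectral asymptotics of the 4×4 covariance matrix in 2D.** For the covariance
matrix `C(δ)_{ij} = r(P_i − P_j)` of the values of a doubly periodic Gaussian random
field at the corners `P₁ = (0,0)`, `P₂ = (δ,0)`, `P₃ = (δ,δ)`, `P₄ = (0,δ)` of a square,
one has `det C(δ) = R_{0,0}R_{0,1}R_{1,0}R_{1,1}δ⁸ + O(δ⁹)`, the smallest eigenvalue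
satisfies `λ₁(δ) = (R_{1,1}/4)δ⁴ + O(δ⁵)`, the largest satisfies
`λ₄(δ) = 4R_{0,0} + O(δ)`, and a unit eigenvector `v₁(δ)` for `λ₁(δ)` can be chosen with
`v₁(δ) → (1,−1,1,−1)ᵗ/2` as `δ → 0⁺`. -/
theorem covariance_asymptotics_two_dim (L : ℝ) (hL : 0 < L) (a : ℕ → ℕ → ℝ)
    (hsum : Summable fun p : ℕ × ℕ =>
      ((p.1 : ℝ) ^ 2 + (p.2 : ℝ) ^ 2) ^ 5 * a p.1 p.2 ^ 2)
    (hnz : ∃ k₁ l₁ : ℕ, 1 ≤ k₁ ∧ 1 ≤ l₁ ∧ a k₁ l₁ ≠ 0)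
    (r : ℝ × ℝ → ℝ) (hr : ∀ d, r d = ∑' p : ℕ × ℕ, a p.1 p.2 ^ 2 *
      Real.cos (2 * π * p.1 * d.1 / L) * Real.cos (2 * π * p.2 * d.2 / L))
    (A : ℕ → ℕ → ℝ) (hA : ∀ p q, A p q =
      ∑' kl : ℕ × ℕ, (kl.1 : ℝ) ^ (2 * p) * (kl.2 : ℝ) ^ (2 * q) * a kl.1 kl.2 ^ 2)
    (R : ℕ → ℕ → ℝ) (hR : ∀ p q, R p q = (2 * π / L) ^ (2 * p + 2 * q) * A p q)
    (Pt : ℝ → Fin 4 → ℝ × ℝ)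
    (hPt : ∀ δ, Pt δ = ![(0, 0), (δ, 0), (δ, δ), (0, δ)])
    (C : ℝ → Matrix (Fin 4) (Fin 4) ℝ)
    (hC : ∀ δ i j, C δ i j = r (Pt δ i - Pt δ j)) :
    ((fun δ => (C δ).det - R 0 0 * R 0 1 * R 1 0 * R 1 1 * δ ^ 8)
        =O[𝓝[>] (0 : ℝ)] fun δ => δ ^ 9) ∧
    ∃ δ₀ > (0 : ℝ), ∃ lam₁ lam₄ : ℝ → ℝ, ∃ v : ℝ → Fin 4 → ℝ,
      (∀ δ ∈ Set.Ioo 0 δ₀,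
        (C δ).mulVec (v δ) = lam₁ δ • v δ ∧
        v δ 0 ^ 2 + v δ 1 ^ 2 + v δ 2 ^ 2 + v δ 3 ^ 2 = 1 ∧
        (∃ w : Fin 4 → ℝ, w ≠ 0 ∧ (C δ).mulVec w = lam₄ δ • w) ∧
        (∀ (μ : ℝ) (w : Fin 4 → ℝ), w ≠ 0 → (C δ).mulVec w = μ • w →
          lam₁ δ ≤ μ ∧ μ ≤ lam₄ δ)) ∧
      ((fun δ => lam₁ δ - R 1 1 / 4 * δ ^ 4) =O[𝓝[>] (0 : ℝ)] fun δ => δ ^ 5) ∧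
      ((fun δ => lam₄ δ - 4 * R 0 0) =O[𝓝[>] (0 : ℝ)] fun δ => δ) ∧
      Tendsto v (𝓝[>] (0 : ℝ))
        (𝓝 ![1 / 2, -(1 / 2), 1 / 2, -(1 / 2)]) := by

  have hπ := Real.pi_pos
  set c : ℝ := 2 * π / L with hcdef
  have hc : 0 < c := by positivity
  set e : ℕ × ℕ → ℝ := fun p => a p.1 p.2 ^ 2 with hedef
  have he0 : ∀ p, 0 ≤ e p := fun p => sq_nonneg _
  set B : ℕ × ℕ → ℝ := fun p => 1 + ((p.1 : ℝ) ^ 2 + (p.2 : ℝ) ^ 2) ^ 5 with hBdef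
  have hB1 : ∀ p, 1 ≤ B p := fun p => le_add_of_nonneg_right (by positivity)
  have hB0 : ∀ p, 0 ≤ B p := fun p => le_trans zero_le_one (hB1 p)
  have hse : Summable e := by
    have hfin : Summable (fun p : ℕ × ℕ => if p = (0, 0) then e p else 0) :=
      summable_of_ne_finset_zero (s := {(0, 0)}) (fun p hp => if_neg (by simpa using hp))
    apply Summable.of_nonneg_of_le he0 ?_ (hfin.add hsum)
    intro p
    by_cases hp : p = (0, 0)
    · simp only [hp, if_pos]
      exact le_add_of_nonneg_right (by positivity)
    · simp only [hp, if_neg, not_false_iff, zero_add]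
      have h1 : (1 : ℝ) ≤ (p.1 : ℝ) ^ 2 + (p.2 : ℝ) ^ 2 := by
        have : p.1 ≠ 0 ∨ p.2 ≠ 0 := by
          by_contra h; push_neg at h; exact hp (Prod.ext h.1 h.2)
        rcases this with h | h
        · have : (1 : ℝ) ≤ (p.1 : ℝ) := by exact_mod_cast Nat.one_le_iff_ne_zero.mpr h
          nlinarith [sq_nonneg ((p.2 : ℝ))]
        · have : (1 : ℝ) ≤ (p.2 : ℝ) := by exact_mod_cast Nat.one_le_iff_ne_zero.mpr h
          nlinarith [sq_nonneg ((p.1 : ℝ))]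
      have h2 : (1 : ℝ) ≤ ((p.1 : ℝ) ^ 2 + (p.2 : ℝ) ^ 2) ^ 5 := one_le_pow₀ h1
      have hep : e p = a p.1 p.2 ^ 2 := rfl
      nlinarith [he0 p, hep]
  have hBe : Summable fun p => B p * e p := by
    have heq : (fun p : ℕ × ℕ => B p * e p) =
        fun p => e p + ((p.1 : ℝ) ^ 2 + (p.2 : ℝ) ^ 2) ^ 5 * e p := by
      funext p; simp only [hBdef]; ring
    rw [heq]; exact hse.add hsum
  have hsummable : ∀ (w : ℕ × ℕ → ℝ) (M : ℝ), (∀ p, |w p| ≤ M * B p) →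
      Summable fun p => e p * w p := by
    intro w M hw
    apply Summable.of_abs
    apply Summable.of_nonneg_of_le (fun p => abs_nonneg _) ?_ (hBe.mul_left M)
    intro p
    rw [abs_mul, abs_of_nonneg (he0 p)]
    calc e p * |w p| ≤ e p * (M * B p) := mul_le_mul_of_nonneg_left (hw p) (he0 p)
      _ = M * (B p * e p) := by ring
  set S : ℝ := ∑' p, B p * e p with hSdef
  have hS0 : 0 ≤ S := tsum_nonneg fun p => mul_nonneg (hB0 p) (he0 p)
  have hbound : ∀ (w : ℕ × ℕ → ℝ) (M : ℝ), (∀ p, |w p| ≤ M * B p) →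
      |∑' p, e p * w p| ≤ M * S := by
    intro w M hw
    have hsw := hsummable w M hw
    calc |∑' p, e p * w p| ≤ ∑' p, |e p * w p| := by
          have := norm_tsum_le_tsum_norm (f := fun p => e p * w p)
            (by simpa only [Real.norm_eq_abs] using hsw.abs)
          simpa only [Real.norm_eq_abs] using this
      _ ≤ ∑' p, M * (B p * e p) := by
          apply Summable.tsum_le_tsum ?_ hsw.abs (hBe.mul_left M)
          intro p
          rw [abs_mul, abs_of_nonneg (he0 p)]
          calc e p * |w p| ≤ e p * (M * B p) := mul_le_mul_of_nonneg_left (hw p) (he0 p)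
            _ = M * (B p * e p) := by ring
      _ = M * S := by rw [tsum_mul_left]
  have hmono : ∀ (p : ℕ × ℕ) (i j : ℕ), i + j ≤ 5 →
      ((p.1 : ℝ)) ^ (2 * i) * ((p.2 : ℝ)) ^ (2 * j) ≤ B p := by
    intro p i j hij
    have hk : (0 : ℝ) ≤ (p.1 : ℝ) ^ 2 := sq_nonneg _
    have hl : (0 : ℝ) ≤ (p.2 : ℝ) ^ 2 := sq_nonneg _
    have h1 : ((p.1 : ℝ)) ^ (2 * i) * ((p.2 : ℝ)) ^ (2 * j) ≤
        ((p.1 : ℝ) ^ 2 + (p.2 : ℝ) ^ 2) ^ (i + j) := by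
      rw [pow_mul, pow_mul, pow_add]
      exact mul_le_mul (pow_le_pow_left₀ hk (le_add_of_nonneg_right hl) i)
        (pow_le_pow_left₀ hl (le_add_of_nonneg_left hk) j)
        (pow_nonneg hl j) (pow_nonneg (by positivity) i)
    have h2 : ((p.1 : ℝ) ^ 2 + (p.2 : ℝ) ^ 2) ^ (i + j) ≤ B p := by
      rcases le_or_gt ((p.1 : ℝ) ^ 2 + (p.2 : ℝ) ^ 2) 1 with h | h
      · have h5 : (0:ℝ) ≤ ((p.1 : ℝ) ^ 2 + (p.2 : ℝ) ^ 2) ^ 5 := by positivity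
        have h6 := pow_le_one₀ (by positivity : (0:ℝ) ≤ (p.1 : ℝ) ^ 2 + (p.2 : ℝ) ^ 2) h (n := i + j)
        simp only [hBdef]
        linarith
      · have h3 : ((p.1 : ℝ) ^ 2 + (p.2 : ℝ) ^ 2) ^ (i + j) ≤
            ((p.1 : ℝ) ^ 2 + (p.2 : ℝ) ^ 2) ^ 5 := pow_le_pow_right₀ h.le hij
        simp only [hBdef]; linarith
    linarith
  have hsumB2 : ∀ p : ℕ × ℕ, (p.1 : ℝ) ^ 2 + (p.2 : ℝ) ^ 2 ≤ B p := by
    intro p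
    rcases le_or_gt ((p.1 : ℝ) ^ 2 + (p.2 : ℝ) ^ 2) 1 with h | h
    · simp only [hBdef]
      have : (0:ℝ) ≤ ((p.1 : ℝ) ^ 2 + (p.2 : ℝ) ^ 2) ^ 5 := by positivity
      linarith
    · have := le_self_pow₀ h.le (by norm_num : (5:ℕ) ≠ 0)
      simp only [hBdef]; linarith
  -- series representation of r
  have hr2 : ∀ s t : ℝ, r (s, t) =
      ∑' p : ℕ × ℕ, e p * (Real.cos (c * p.1 * s) * Real.cos (c * p.2 * t)) := by
    intro s t
    rw [hr]
    apply tsum_congr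
    intro p
    have h1 : 2 * π * (p.1 : ℝ) * s / L = c * p.1 * s := by rw [hcdef]; field_simp
    have h2 : 2 * π * (p.2 : ℝ) * t / L = c * p.2 * t := by rw [hcdef]; field_simp
    simp only []
    rw [h1, h2, hedef]; ring

  -- evenness
  have hrev1 : ∀ s t : ℝ, r (-s, t) = r (s, t) := by
    intro s t
    rw [hr2, hr2]
    apply tsum_congr; intro p
    rw [show c * (p.1 : ℝ) * -s = -(c * p.1 * s) by ring, Real.cos_neg]
  have hrev2 : ∀ s t : ℝ, r (s, -t) = r (s, t) := by
    intro s t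
    rw [hr2, hr2]
    apply tsum_congr; intro p
    rw [show c * (p.2 : ℝ) * -t = -(c * p.2 * t) by ring, Real.cos_neg]
  -- basic summabilities
  have habs_cc : ∀ (u v : ℝ), |Real.cos u * Real.cos v| ≤ 1 := by
    intro u v
    rw [abs_mul]
    exact mul_le_one₀ (Real.abs_cos_le_one u) (abs_nonneg _) (Real.abs_cos_le_one v)
  have hsumx : ∀ δ : ℝ, Summable fun p : ℕ × ℕ => e p * Real.cos (c * p.1 * δ) :=
    fun δ => hsummable _ 1 fun p => by
      rw [one_mul]; exact le_trans (Real.abs_cos_le_one _) (hB1 p)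
  have hsumy : ∀ δ : ℝ, Summable fun p : ℕ × ℕ => e p * Real.cos (c * p.2 * δ) :=
    fun δ => hsummable _ 1 fun p => by
      rw [one_mul]; exact le_trans (Real.abs_cos_le_one _) (hB1 p)
  have hsumxy : ∀ δ : ℝ, Summable fun p : ℕ × ℕ =>
      e p * (Real.cos (c * p.1 * δ) * Real.cos (c * p.2 * δ)) :=
    fun δ => hsummable _ 1 fun p => by
      rw [one_mul]; exact le_trans (habs_cc _ _) (hB1 p)
  -- the four symmetrized series
  have h00 : r (0, 0) = ∑' p : ℕ × ℕ, e p := by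
    rw [hr2]; apply tsum_congr; intro p; simp
  have h10 : ∀ δ : ℝ, r (δ, 0) = ∑' p : ℕ × ℕ, e p * Real.cos (c * p.1 * δ) := by
    intro δ; rw [hr2]; apply tsum_congr; intro p; simp
  have h01 : ∀ δ : ℝ, r (0, δ) = ∑' p : ℕ × ℕ, e p * Real.cos (c * p.2 * δ) := by
    intro δ; rw [hr2]; apply tsum_congr; intro p; simp
  have h11 : ∀ δ : ℝ, r (δ, δ) =
      ∑' p : ℕ × ℕ, e p * (Real.cos (c * p.1 * δ) * Real.cos (c * p.2 * δ)) :=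
    fun δ => hr2 δ δ
  set lamA : ℝ → ℝ := fun δ => ∑' p : ℕ × ℕ,
    e p * ((1 + Real.cos (c * p.1 * δ)) * (1 + Real.cos (c * p.2 * δ))) with hlamAdef
  set lamB : ℝ → ℝ := fun δ => ∑' p : ℕ × ℕ,
    e p * ((1 + Real.cos (c * p.1 * δ)) * (1 - Real.cos (c * p.2 * δ))) with hlamBdef
  set lamC : ℝ → ℝ := fun δ => ∑' p : ℕ × ℕ,
    e p * ((1 - Real.cos (c * p.1 * δ)) * (1 + Real.cos (c * p.2 * δ))) with hlamCdef
  set lamS : ℝ → ℝ := fun δ => ∑' p : ℕ × ℕ,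
    e p * ((1 - Real.cos (c * p.1 * δ)) * (1 - Real.cos (c * p.2 * δ))) with hlamSdef
  have hcombA : ∀ δ : ℝ, lamA δ = r (0, 0) + r (δ, 0) + r (0, δ) + r (δ, δ) := by
    intro δ
    rw [h00, h10, h01, h11, ← Summable.tsum_add hse (hsumx δ),
      ← Summable.tsum_add (hse.add (hsumx δ)) (hsumy δ),
      ← Summable.tsum_add ((hse.add (hsumx δ)).add (hsumy δ)) (hsumxy δ), hlamAdef]
    exact tsum_congr fun p => by ring
  have hcombB : ∀ δ : ℝ, lamB δ = r (0, 0) + r (δ, 0) - r (0, δ) - r (δ, δ) := by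
    intro δ
    rw [h00, h10, h01, h11, ← Summable.tsum_add hse (hsumx δ),
      ← Summable.tsum_sub (hse.add (hsumx δ)) (hsumy δ),
      ← Summable.tsum_sub ((hse.add (hsumx δ)).sub (hsumy δ)) (hsumxy δ), hlamBdef]
    exact tsum_congr fun p => by ring
  have hcombC : ∀ δ : ℝ, lamC δ = r (0, 0) - r (δ, 0) + r (0, δ) - r (δ, δ) := by
    intro δ
    rw [h00, h10, h01, h11, ← Summable.tsum_sub hse (hsumx δ),
      ← Summable.tsum_add (hse.sub (hsumx δ)) (hsumy δ),
      ← Summable.tsum_sub ((hse.sub (hsumx δ)).add (hsumy δ)) (hsumxy δ), hlamCdef]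
    exact tsum_congr fun p => by ring
  have hcombS : ∀ δ : ℝ, lamS δ = r (0, 0) - r (δ, 0) - r (0, δ) + r (δ, δ) := by
    intro δ
    rw [h00, h10, h01, h11, ← Summable.tsum_sub hse (hsumx δ),
      ← Summable.tsum_sub (hse.sub (hsumx δ)) (hsumy δ),
      ← Summable.tsum_add ((hse.sub (hsumx δ)).sub (hsumy δ)) (hsumxy δ), hlamSdef]
    exact tsum_congr fun p => by ring

  have hCmat : ∀ δ : ℝ, C δ = Matrix.of ![![r (0, 0), r (δ, 0), r (δ, δ), r (0, δ)],
      ![r (δ, 0), r (0, 0), r (0, δ), r (δ, δ)],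
      ![r (δ, δ), r (0, δ), r (0, 0), r (δ, 0)],
      ![r (0, δ), r (δ, δ), r (δ, 0), r (0, 0)]] := by
    intro δ
    ext i j
    fin_cases i <;> fin_cases j <;>
      simp [hC, hPt, Prod.mk_sub_mk, hrev1, hrev2, Prod.mk_zero_zero]
  have hdet : ∀ δ : ℝ, (C δ).det = lamA δ * lamB δ * lamC δ * lamS δ := by
    intro δ
    rw [hCmat δ, hcombA δ, hcombB δ, hcombC δ, hcombS δ]
    simp [Matrix.det_succ_row_zero, Fin.sum_univ_succ]
    simp (config := {decide := true}) [Fin.succAbove]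
    ring
  have hmvS : ∀ δ : ℝ, (C δ).mulVec ![1 / 2, -(1 / 2), 1 / 2, -(1 / 2)] =
      lamS δ • ![1 / 2, -(1 / 2), 1 / 2, -(1 / 2)] := by
    intro δ
    rw [hCmat δ, hcombS δ]
    funext i
    fin_cases i <;>
      simp [Matrix.mulVec, dotProduct, Fin.sum_univ_four] <;> ring
  have hmvA : ∀ δ : ℝ, (C δ).mulVec ![1, 1, 1, 1] = lamA δ • ![1, 1, 1, 1] := by
    intro δ
    rw [hCmat δ, hcombA δ]
    funext i
    fin_cases i <;>
      simp [Matrix.mulVec, dotProduct, Fin.sum_univ_four] <;> ring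
  have heig : ∀ (δ μ : ℝ) (w : Fin 4 → ℝ), w ≠ 0 → (C δ).mulVec w = μ • w →
      μ = lamA δ ∨ μ = lamB δ ∨ μ = lamC δ ∨ μ = lamS δ := by
    intro δ μ w hw hmv
    have E : ∀ i, ((C δ).mulVec w) i = μ * w i := fun i => by rw [hmv]; simp
    have E0 := E 0
    have E1 := E 1
    have E2 := E 2
    have E3 := E 3
    rw [hCmat δ] at E0 E1 E2 E3
    simp only [Matrix.mulVec, dotProduct, Fin.sum_univ_four, Matrix.of_apply,
      Matrix.cons_val', Matrix.cons_val_zero, Matrix.cons_val_one, Matrix.head_cons,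
      Matrix.empty_val', Matrix.cons_val_fin_one, Matrix.cons_val_two, Matrix.tail_cons,
      Matrix.cons_val_three, Matrix.head_fin_const] at E0 E1 E2 E3
    by_contra hcon
    push_neg at hcon
    obtain ⟨n1, n2, n3, n4⟩ := hcon
    apply hw
    have hs0 : w 0 + w 1 + w 2 + w 3 = 0 := by
      by_contra hs
      have key : lamA δ * (w 0 + w 1 + w 2 + w 3) = μ * (w 0 + w 1 + w 2 + w 3) := by
        rw [hcombA δ]; linear_combination E0 + E1 + E2 + E3
      exact n1 (mul_right_cancel₀ hs key).symm
    have hs1 : w 0 + w 1 - w 2 - w 3 = 0 := by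
      by_contra hs
      have key : lamB δ * (w 0 + w 1 - w 2 - w 3) = μ * (w 0 + w 1 - w 2 - w 3) := by
        rw [hcombB δ]; linear_combination E0 + E1 - E2 - E3
      exact n2 (mul_right_cancel₀ hs key).symm
    have hs2 : w 0 - w 1 + w 2 - w 3 = 0 := by
      by_contra hs
      have key : lamS δ * (w 0 - w 1 + w 2 - w 3) = μ * (w 0 - w 1 + w 2 - w 3) := by
        rw [hcombS δ]; linear_combination E0 - E1 + E2 - E3
      exact n4 (mul_right_cancel₀ hs key).symm
    have hs3 : w 0 - w 1 - w 2 + w 3 = 0 := by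
      by_contra hs
      have key : lamC δ * (w 0 - w 1 - w 2 + w 3) = μ * (w 0 - w 1 - w 2 + w 3) := by
        rw [hcombC δ]; linear_combination E0 - E1 - E2 + E3
      exact n3 (mul_right_cancel₀ hs key).symm
    funext i
    have g0 : w 0 = 0 := by linarith
    have g1 : w 1 = 0 := by linarith
    have g2 : w 2 = 0 := by linarith
    have g3 : w 3 = 0 := by linarith
    fin_cases i <;> simp only [Pi.zero_apply] <;> assumption

  -- specialized A, R values
  have hA00 : A 0 0 = ∑' p : ℕ × ℕ, e p := by
    rw [hA]; exact tsum_congr fun p => by simp [hedef]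
  have hA10 : A 1 0 = ∑' p : ℕ × ℕ, e p * (p.1 : ℝ) ^ 2 := by
    rw [hA]; exact tsum_congr fun p => by simp only [hedef]; norm_num; ring
  have hA01 : A 0 1 = ∑' p : ℕ × ℕ, e p * (p.2 : ℝ) ^ 2 := by
    rw [hA]; exact tsum_congr fun p => by simp only [hedef]; norm_num; ring
  have hA11 : A 1 1 = ∑' p : ℕ × ℕ, e p * ((p.1 : ℝ) ^ 2 * (p.2 : ℝ) ^ 2) := by
    rw [hA]; exact tsum_congr fun p => by simp only [hedef]; norm_num; ring
  have hR00 : R 0 0 = A 0 0 := by rw [hR]; norm_num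
  have hR10 : R 1 0 = c ^ 2 * A 1 0 := by rw [hR]
  have hR01 : R 0 1 = c ^ 2 * A 0 1 := by rw [hR]
  have hR11 : R 1 1 = c ^ 4 * A 1 1 := by rw [hR]
  -- summabilities of weighted series
  have hm10 : ∀ p : ℕ × ℕ, ((p.1 : ℝ)) ^ 2 ≤ B p := by
    intro p; have := hmono p 1 0 (by norm_num); norm_num at this; exact this
  have hm01 : ∀ p : ℕ × ℕ, ((p.2 : ℝ)) ^ 2 ≤ B p := by
    intro p; have := hmono p 0 1 (by norm_num); norm_num at this; exact this
  have hm11 : ∀ p : ℕ × ℕ, ((p.1 : ℝ)) ^ 2 * ((p.2 : ℝ)) ^ 2 ≤ B p := by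
    intro p; have := hmono p 1 1 (by norm_num); norm_num at this; exact this
  have hm12 : ∀ p : ℕ × ℕ, ((p.1 : ℝ)) ^ 2 * ((p.2 : ℝ)) ^ 4 ≤ B p := by
    intro p; have := hmono p 1 2 (by norm_num); norm_num at this; exact this
  have hm21 : ∀ p : ℕ × ℕ, ((p.1 : ℝ)) ^ 4 * ((p.2 : ℝ)) ^ 2 ≤ B p := by
    intro p; have := hmono p 2 1 (by norm_num); norm_num at this; exact this
  have hm22 : ∀ p : ℕ × ℕ, ((p.1 : ℝ)) ^ 4 * ((p.2 : ℝ)) ^ 4 ≤ B p := by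
    intro p; have := hmono p 2 2 (by norm_num); norm_num at this; exact this
  have hm20 : ∀ p : ℕ × ℕ, ((p.1 : ℝ)) ^ 4 ≤ B p := by
    intro p; have := hmono p 2 0 (by norm_num); norm_num at this; exact this
  have hm02 : ∀ p : ℕ × ℕ, ((p.2 : ℝ)) ^ 4 ≤ B p := by
    intro p; have := hmono p 0 2 (by norm_num); norm_num at this; exact this
  have hsm10 : Summable fun p : ℕ × ℕ => e p * (p.1 : ℝ) ^ 2 :=
    hsummable _ 1 fun p => by
      rw [one_mul, abs_of_nonneg (by positivity)]; exact hm10 p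
  have hsm01 : Summable fun p : ℕ × ℕ => e p * (p.2 : ℝ) ^ 2 :=
    hsummable _ 1 fun p => by
      rw [one_mul, abs_of_nonneg (by positivity)]; exact hm01 p
  have hsm11 : Summable fun p : ℕ × ℕ => e p * ((p.1 : ℝ) ^ 2 * (p.2 : ℝ) ^ 2) :=
    hsummable _ 1 fun p => by
      rw [one_mul, abs_of_nonneg (by positivity)]; exact hm11 p
  -- positivity of the A and R values
  obtain ⟨k₁, l₁, hk₁, hl₁, ha₁⟩ := hnz
  have hkpos : (0 : ℝ) < (k₁ : ℝ) := by exact_mod_cast Nat.lt_of_lt_of_le Nat.zero_lt_one hk₁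
  have hlpos : (0 : ℝ) < (l₁ : ℝ) := by exact_mod_cast Nat.lt_of_lt_of_le Nat.zero_lt_one hl₁
  have hepos : 0 < e (k₁, l₁) := pow_two_pos_of_ne_zero ha₁
  have hA00pos : 0 < A 0 0 := by
    rw [hA00]
    exact Summable.tsum_pos hse (fun p => he0 p) (k₁, l₁) hepos
  have hA10pos : 0 < A 1 0 := by
    rw [hA10]
    exact Summable.tsum_pos hsm10 (fun p => by positivity) (k₁, l₁)
      (mul_pos hepos (pow_pos hkpos 2))
  have hA01pos : 0 < A 0 1 := by
    rw [hA01]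
    exact Summable.tsum_pos hsm01 (fun p => by positivity) (k₁, l₁)
      (mul_pos hepos (pow_pos hlpos 2))
  have hA11pos : 0 < A 1 1 := by
    rw [hA11]
    exact Summable.tsum_pos hsm11 (fun p => by positivity) (k₁, l₁)
      (mul_pos hepos (mul_pos (pow_pos hkpos 2) (pow_pos hlpos 2)))
  have hR00pos : 0 < R 0 0 := by rw [hR00]; exact hA00pos
  have hR10pos : 0 < R 1 0 := by rw [hR10]; positivity
  have hR01pos : 0 < R 0 1 := by rw [hR01]; positivity
  have hR11pos : 0 < R 1 1 := by rw [hR11]; positivity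
  -- abs bounds for 1 ± cos
  have habs2m : ∀ u : ℝ, |1 - Real.cos u| ≤ 2 := fun u => by
    rw [abs_le]
    constructor <;> nlinarith [Real.cos_le_one u, Real.neg_one_le_cos u]
  have habs2p : ∀ u : ℝ, |1 + Real.cos u| ≤ 2 := fun u => by
    rw [abs_le]
    constructor <;> nlinarith [Real.cos_le_one u, Real.neg_one_le_cos u]
  have hsmS : ∀ δ : ℝ, Summable fun p : ℕ × ℕ =>
      e p * ((1 - Real.cos (c * p.1 * δ)) * (1 - Real.cos (c * p.2 * δ))) :=
    fun δ => hsummable _ 4 fun p => by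
      rw [abs_mul]
      calc |1 - Real.cos (c * p.1 * δ)| * |1 - Real.cos (c * p.2 * δ)| ≤ 2 * 2 :=
            mul_le_mul (habs2m _) (habs2m _) (abs_nonneg _) (by norm_num)
        _ ≤ 4 * B p := by nlinarith [hB1 p]
  have hsmB : ∀ δ : ℝ, Summable fun p : ℕ × ℕ =>
      e p * ((1 + Real.cos (c * p.1 * δ)) * (1 - Real.cos (c * p.2 * δ))) :=
    fun δ => hsummable _ 4 fun p => by
      rw [abs_mul]
      calc |1 + Real.cos (c * p.1 * δ)| * |1 - Real.cos (c * p.2 * δ)| ≤ 2 * 2 :=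
            mul_le_mul (habs2p _) (habs2m _) (abs_nonneg _) (by norm_num)
        _ ≤ 4 * B p := by nlinarith [hB1 p]
  have hsmC : ∀ δ : ℝ, Summable fun p : ℕ × ℕ =>
      e p * ((1 - Real.cos (c * p.1 * δ)) * (1 + Real.cos (c * p.2 * δ))) :=
    fun δ => hsummable _ 4 fun p => by
      rw [abs_mul]
      calc |1 - Real.cos (c * p.1 * δ)| * |1 + Real.cos (c * p.2 * δ)| ≤ 2 * 2 :=
            mul_le_mul (habs2m _) (habs2p _) (abs_nonneg _) (by norm_num)
        _ ≤ 4 * B p := by nlinarith [hB1 p]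
  have hsmA : ∀ δ : ℝ, Summable fun p : ℕ × ℕ =>
      e p * ((1 + Real.cos (c * p.1 * δ)) * (1 + Real.cos (c * p.2 * δ))) :=
    fun δ => hsummable _ 4 fun p => by
      rw [abs_mul]
      calc |1 + Real.cos (c * p.1 * δ)| * |1 + Real.cos (c * p.2 * δ)| ≤ 2 * 2 :=
            mul_le_mul (habs2p _) (habs2p _) (abs_nonneg _) (by norm_num)
        _ ≤ 4 * B p := by nlinarith [hB1 p]
  -- the four estimates
  have hestS : ∀ δ : ℝ, 0 < δ → δ ≤ 1 →
      |lamS δ - R 1 1 / 4 * δ ^ 4| ≤ (c ^ 6 / 24 + c ^ 8 / 576) * S * δ ^ 6 := by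
    intro δ hδ0 hδ1
    have hsmr : Summable fun p : ℕ × ℕ =>
        e p * (c ^ 4 * (p.1 : ℝ) ^ 2 * (p.2 : ℝ) ^ 2 * δ ^ 4 / 4) :=
      hsummable _ (c ^ 4 * δ ^ 4 / 4) fun p => by
        rw [abs_of_nonneg (by positivity)]
        calc c ^ 4 * (p.1 : ℝ) ^ 2 * (p.2 : ℝ) ^ 2 * δ ^ 4 / 4
            = c ^ 4 * δ ^ 4 / 4 * ((p.1 : ℝ) ^ 2 * (p.2 : ℝ) ^ 2) := by ring
          _ ≤ c ^ 4 * δ ^ 4 / 4 * B p := by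
              exact mul_le_mul_of_nonneg_left (hm11 p) (by positivity)
    have hlead : R 1 1 / 4 * δ ^ 4 =
        ∑' p : ℕ × ℕ, e p * (c ^ 4 * (p.1 : ℝ) ^ 2 * (p.2 : ℝ) ^ 2 * δ ^ 4 / 4) := by
      have h2 : ∑' p : ℕ × ℕ, e p * (c ^ 4 * (p.1 : ℝ) ^ 2 * (p.2 : ℝ) ^ 2 * δ ^ 4 / 4) =
          c ^ 4 * δ ^ 4 / 4 * ∑' p : ℕ × ℕ, e p * ((p.1 : ℝ) ^ 2 * (p.2 : ℝ) ^ 2) := by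
        rw [← tsum_mul_left]
        exact tsum_congr fun p => by ring
      rw [h2, hR11, hA11]; ring
    have hsub : lamS δ - R 1 1 / 4 * δ ^ 4 = ∑' p : ℕ × ℕ,
        e p * ((1 - Real.cos (c * p.1 * δ)) * (1 - Real.cos (c * p.2 * δ)) -
          c ^ 4 * (p.1 : ℝ) ^ 2 * (p.2 : ℝ) ^ 2 * δ ^ 4 / 4) := by
      rw [hlead, hlamSdef, ← Summable.tsum_sub (hsmS δ) hsmr]
      exact tsum_congr fun p => by ring
    rw [hsub]
    have hpt : ∀ p : ℕ × ℕ, |(1 - Real.cos (c * p.1 * δ)) * (1 - Real.cos (c * p.2 * δ)) -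
        c ^ 4 * (p.1 : ℝ) ^ 2 * (p.2 : ℝ) ^ 2 * δ ^ 4 / 4| ≤
        (c ^ 6 / 24 + c ^ 8 / 576) * δ ^ 6 * B p := by
      intro p
      have hx : (0 : ℝ) ≤ c * p.1 * δ := by positivity
      have hy : (0 : ℝ) ≤ c * p.2 * δ := by positivity
      have hδ2 : δ ^ 2 ≤ 1 := pow_le_one₀ hδ0.le hδ1
      calc |(1 - Real.cos (c * p.1 * δ)) * (1 - Real.cos (c * p.2 * δ)) -
            c ^ 4 * (p.1 : ℝ) ^ 2 * (p.2 : ℝ) ^ 2 * δ ^ 4 / 4|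
          = |(1 - Real.cos (c * p.1 * δ)) * (1 - Real.cos (c * p.2 * δ)) -
            (c * p.1 * δ) ^ 2 * (c * p.2 * δ) ^ 2 / 4| := by ring_nf
        _ ≤ (c * p.1 * δ) ^ 2 * (c * p.2 * δ) ^ 4 / 48 +
            (c * p.1 * δ) ^ 4 * (c * p.2 * δ) ^ 2 / 48 +
            (c * p.1 * δ) ^ 4 * (c * p.2 * δ) ^ 4 / 576 := termS hx hy
        _ = c ^ 6 * ((p.1 : ℝ) ^ 2 * (p.2 : ℝ) ^ 4) * δ ^ 6 / 48 +
            c ^ 6 * ((p.1 : ℝ) ^ 4 * (p.2 : ℝ) ^ 2) * δ ^ 6 / 48 +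
            c ^ 8 * ((p.1 : ℝ) ^ 4 * (p.2 : ℝ) ^ 4) * (δ ^ 2 * δ ^ 6) / 576 := by ring
        _ ≤ c ^ 6 * B p * δ ^ 6 / 48 + c ^ 6 * B p * δ ^ 6 / 48 +
            c ^ 8 * B p * (1 * δ ^ 6) / 576 := by
              gcongr <;> first | exact hm12 p | exact hm21 p | exact hm22 p | exact hδ2
        _ = (c ^ 6 / 24 + c ^ 8 / 576) * δ ^ 6 * B p := by ring
    calc |∑' p : ℕ × ℕ, e p * ((1 - Real.cos (c * p.1 * δ)) * (1 - Real.cos (c * p.2 * δ)) -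
          c ^ 4 * (p.1 : ℝ) ^ 2 * (p.2 : ℝ) ^ 2 * δ ^ 4 / 4)| ≤
          (c ^ 6 / 24 + c ^ 8 / 576) * δ ^ 6 * S := hbound _ _ hpt
      _ = (c ^ 6 / 24 + c ^ 8 / 576) * S * δ ^ 6 := by ring

  have hestB : ∀ δ : ℝ, 0 < δ →
      |lamB δ - R 0 1 * δ ^ 2| ≤ c ^ 4 / 3 * S * δ ^ 4 := by
    intro δ hδ0
    have hsmr : Summable fun p : ℕ × ℕ => e p * (c ^ 2 * (p.2 : ℝ) ^ 2 * δ ^ 2) :=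
      hsummable _ (c ^ 2 * δ ^ 2) fun p => by
        rw [abs_of_nonneg (by positivity)]
        calc c ^ 2 * (p.2 : ℝ) ^ 2 * δ ^ 2 = c ^ 2 * δ ^ 2 * (p.2 : ℝ) ^ 2 := by ring
          _ ≤ c ^ 2 * δ ^ 2 * B p := mul_le_mul_of_nonneg_left (hm01 p) (by positivity)
    have hlead : R 0 1 * δ ^ 2 = ∑' p : ℕ × ℕ, e p * (c ^ 2 * (p.2 : ℝ) ^ 2 * δ ^ 2) := by
      have h2 : ∑' p : ℕ × ℕ, e p * (c ^ 2 * (p.2 : ℝ) ^ 2 * δ ^ 2) =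
          c ^ 2 * δ ^ 2 * ∑' p : ℕ × ℕ, e p * (p.2 : ℝ) ^ 2 := by
        rw [← tsum_mul_left]
        exact tsum_congr fun p => by ring
      rw [h2, hR01, hA01]; ring
    have hsub : lamB δ - R 0 1 * δ ^ 2 = ∑' p : ℕ × ℕ,
        e p * ((1 + Real.cos (c * p.1 * δ)) * (1 - Real.cos (c * p.2 * δ)) -
          c ^ 2 * (p.2 : ℝ) ^ 2 * δ ^ 2) := by
      rw [hlead, hlamBdef, ← Summable.tsum_sub (hsmB δ) hsmr]
      exact tsum_congr fun p => by ring
    rw [hsub]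
    have hpt : ∀ p : ℕ × ℕ, |(1 + Real.cos (c * p.1 * δ)) * (1 - Real.cos (c * p.2 * δ)) -
        c ^ 2 * (p.2 : ℝ) ^ 2 * δ ^ 2| ≤ c ^ 4 / 3 * δ ^ 4 * B p := by
      intro p
      have hx : (0 : ℝ) ≤ c * p.1 * δ := by positivity
      have hy : (0 : ℝ) ≤ c * p.2 * δ := by positivity
      calc |(1 + Real.cos (c * p.1 * δ)) * (1 - Real.cos (c * p.2 * δ)) -
            c ^ 2 * (p.2 : ℝ) ^ 2 * δ ^ 2|
          = |(1 + Real.cos (c * p.1 * δ)) * (1 - Real.cos (c * p.2 * δ)) -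
            (c * p.2 * δ) ^ 2| := by ring_nf
        _ ≤ (c * p.2 * δ) ^ 4 / 12 + (c * p.1 * δ) ^ 2 * (c * p.2 * δ) ^ 2 / 4 := termB hx hy
        _ = c ^ 4 * ((p.2 : ℝ) ^ 4) * δ ^ 4 / 12 +
            c ^ 4 * ((p.1 : ℝ) ^ 2 * (p.2 : ℝ) ^ 2) * δ ^ 4 / 4 := by ring
        _ ≤ c ^ 4 * B p * δ ^ 4 / 12 + c ^ 4 * B p * δ ^ 4 / 4 := by
              gcongr <;> first | exact hm02 p | exact hm11 p
        _ = c ^ 4 / 3 * δ ^ 4 * B p := by ring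
    calc |∑' p : ℕ × ℕ, e p * ((1 + Real.cos (c * p.1 * δ)) * (1 - Real.cos (c * p.2 * δ)) -
          c ^ 2 * (p.2 : ℝ) ^ 2 * δ ^ 2)| ≤ c ^ 4 / 3 * δ ^ 4 * S := hbound _ _ hpt
      _ = c ^ 4 / 3 * S * δ ^ 4 := by ring
  have hestC : ∀ δ : ℝ, 0 < δ →
      |lamC δ - R 1 0 * δ ^ 2| ≤ c ^ 4 / 3 * S * δ ^ 4 := by
    intro δ hδ0
    have hsmr : Summable fun p : ℕ × ℕ => e p * (c ^ 2 * (p.1 : ℝ) ^ 2 * δ ^ 2) :=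
      hsummable _ (c ^ 2 * δ ^ 2) fun p => by
        rw [abs_of_nonneg (by positivity)]
        calc c ^ 2 * (p.1 : ℝ) ^ 2 * δ ^ 2 = c ^ 2 * δ ^ 2 * (p.1 : ℝ) ^ 2 := by ring
          _ ≤ c ^ 2 * δ ^ 2 * B p := mul_le_mul_of_nonneg_left (hm10 p) (by positivity)
    have hlead : R 1 0 * δ ^ 2 = ∑' p : ℕ × ℕ, e p * (c ^ 2 * (p.1 : ℝ) ^ 2 * δ ^ 2) := by
      have h2 : ∑' p : ℕ × ℕ, e p * (c ^ 2 * (p.1 : ℝ) ^ 2 * δ ^ 2) =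
          c ^ 2 * δ ^ 2 * ∑' p : ℕ × ℕ, e p * (p.1 : ℝ) ^ 2 := by
        rw [← tsum_mul_left]
        exact tsum_congr fun p => by ring
      rw [h2, hR10, hA10]; ring
    have hsub : lamC δ - R 1 0 * δ ^ 2 = ∑' p : ℕ × ℕ,
        e p * ((1 - Real.cos (c * p.1 * δ)) * (1 + Real.cos (c * p.2 * δ)) -
          c ^ 2 * (p.1 : ℝ) ^ 2 * δ ^ 2) := by
      rw [hlead, hlamCdef, ← Summable.tsum_sub (hsmC δ) hsmr]
      exact tsum_congr fun p => by ring
    rw [hsub]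
    have hpt : ∀ p : ℕ × ℕ, |(1 - Real.cos (c * p.1 * δ)) * (1 + Real.cos (c * p.2 * δ)) -
        c ^ 2 * (p.1 : ℝ) ^ 2 * δ ^ 2| ≤ c ^ 4 / 3 * δ ^ 4 * B p := by
      intro p
      have hx : (0 : ℝ) ≤ c * p.1 * δ := by positivity
      have hy : (0 : ℝ) ≤ c * p.2 * δ := by positivity
      have h := termB hy hx
      calc |(1 - Real.cos (c * p.1 * δ)) * (1 + Real.cos (c * p.2 * δ)) -
            c ^ 2 * (p.1 : ℝ) ^ 2 * δ ^ 2|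
          = |(1 + Real.cos (c * p.2 * δ)) * (1 - Real.cos (c * p.1 * δ)) -
            (c * p.1 * δ) ^ 2| := by ring_nf
        _ ≤ (c * p.1 * δ) ^ 4 / 12 + (c * p.2 * δ) ^ 2 * (c * p.1 * δ) ^ 2 / 4 := h
        _ = c ^ 4 * ((p.1 : ℝ) ^ 4) * δ ^ 4 / 12 +
            c ^ 4 * ((p.1 : ℝ) ^ 2 * (p.2 : ℝ) ^ 2) * δ ^ 4 / 4 := by ring
        _ ≤ c ^ 4 * B p * δ ^ 4 / 12 + c ^ 4 * B p * δ ^ 4 / 4 := by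
              gcongr <;> first | exact hm20 p | exact hm11 p
        _ = c ^ 4 / 3 * δ ^ 4 * B p := by ring
    calc |∑' p : ℕ × ℕ, e p * ((1 - Real.cos (c * p.1 * δ)) * (1 + Real.cos (c * p.2 * δ)) -
          c ^ 2 * (p.1 : ℝ) ^ 2 * δ ^ 2)| ≤ c ^ 4 / 3 * δ ^ 4 * S := hbound _ _ hpt
      _ = c ^ 4 / 3 * S * δ ^ 4 := by ring
  have hestA : ∀ δ : ℝ, 0 < δ →
      |lamA δ - 4 * R 0 0| ≤ c ^ 2 * S * δ ^ 2 := by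
    intro δ hδ0
    have hsmr : Summable fun p : ℕ × ℕ => e p * (4 : ℝ) :=
      hsummable _ 4 fun p => by
        rw [abs_of_nonneg (by norm_num : (0:ℝ) ≤ 4)]
        nlinarith [hB1 p]
    have hlead : 4 * R 0 0 = ∑' p : ℕ × ℕ, e p * (4 : ℝ) := by
      rw [tsum_mul_right, hR00, hA00]; ring
    have hsub : lamA δ - 4 * R 0 0 = ∑' p : ℕ × ℕ,
        e p * ((1 + Real.cos (c * p.1 * δ)) * (1 + Real.cos (c * p.2 * δ)) - 4) := by
      rw [hlead, hlamAdef, ← Summable.tsum_sub (hsmA δ) hsmr]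
      exact tsum_congr fun p => by ring
    rw [hsub]
    have hpt : ∀ p : ℕ × ℕ, |(1 + Real.cos (c * p.1 * δ)) * (1 + Real.cos (c * p.2 * δ)) - 4| ≤
        c ^ 2 * δ ^ 2 * B p := by
      intro p
      have hx : (0 : ℝ) ≤ c * p.1 * δ := by positivity
      have hy : (0 : ℝ) ≤ c * p.2 * δ := by positivity
      calc |(1 + Real.cos (c * p.1 * δ)) * (1 + Real.cos (c * p.2 * δ)) - 4|
          ≤ (c * p.1 * δ) ^ 2 + (c * p.2 * δ) ^ 2 := termA hx hy
        _ = c ^ 2 * δ ^ 2 * ((p.1 : ℝ) ^ 2 + (p.2 : ℝ) ^ 2) := by ring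
        _ ≤ c ^ 2 * δ ^ 2 * B p := mul_le_mul_of_nonneg_left (hsumB2 p) (by positivity)
    calc |∑' p : ℕ × ℕ, e p * ((1 + Real.cos (c * p.1 * δ)) * (1 + Real.cos (c * p.2 * δ)) - 4)|
          ≤ c ^ 2 * δ ^ 2 * S := hbound _ _ hpt
      _ = c ^ 2 * S * δ ^ 2 := by ring

  -- global constants
  set K : ℝ := (c ^ 6 / 24 + c ^ 8 / 576) * S + c ^ 4 / 3 * S + c ^ 2 * S + 1 with hKdef
  have hc6 : (0:ℝ) ≤ (c ^ 6 / 24 + c ^ 8 / 576) * S := by positivity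
  have hc4 : (0:ℝ) ≤ c ^ 4 / 3 * S := by positivity
  have hc2 : (0:ℝ) ≤ c ^ 2 * S := by positivity
  have hK0 : 0 < K := by rw [hKdef]; linarith
  have hK1 : (c ^ 6 / 24 + c ^ 8 / 576) * S ≤ K := by rw [hKdef]; linarith
  have hK2 : c ^ 4 / 3 * S ≤ K := by rw [hKdef]; linarith
  have hK3 : c ^ 2 * S ≤ K := by rw [hKdef]; linarith
  -- K-versions of the estimates
  have heS : ∀ δ : ℝ, 0 < δ → δ ≤ 1 → |lamS δ - R 1 1 / 4 * δ ^ 4| ≤ K * δ ^ 6 := by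
    intro δ h0 h1
    exact le_trans (hestS δ h0 h1) (mul_le_mul_of_nonneg_right hK1 (by positivity))
  have heB : ∀ δ : ℝ, 0 < δ → |lamB δ - R 0 1 * δ ^ 2| ≤ K * δ ^ 4 := by
    intro δ h0
    exact le_trans (hestB δ h0) (mul_le_mul_of_nonneg_right hK2 (by positivity))
  have heC : ∀ δ : ℝ, 0 < δ → |lamC δ - R 1 0 * δ ^ 2| ≤ K * δ ^ 4 := by
    intro δ h0
    exact le_trans (hestC δ h0) (mul_le_mul_of_nonneg_right hK2 (by positivity))
  have heA : ∀ δ : ℝ, 0 < δ → |lamA δ - 4 * R 0 0| ≤ K * δ ^ 2 := by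
    intro δ h0
    exact le_trans (hestA δ h0) (mul_le_mul_of_nonneg_right hK3 (by positivity))
  set Q : ℝ := R 1 1 / 4 + 2 * K + 1 with hQdef
  set Q2 : ℝ := R 0 1 + R 1 0 + R 1 1 / 4 + 2 * K + 1 with hQ2def
  have hQ0 : 0 < Q := by rw [hQdef]; linarith [hR11pos]
  have hQ20 : 0 < Q2 := by rw [hQ2def]; linarith [hR01pos, hR10pos, hR11pos]
  set δ₀ : ℝ := min 1 (min (R 0 1 / Q) (min (R 1 0 / Q) (4 * R 0 0 / Q2))) with hδ₀def
  have hδ₀pos : 0 < δ₀ := by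
    rw [hδ₀def]
    apply lt_min one_pos
    apply lt_min (by positivity)
    exact lt_min (by positivity) (by positivity)
  have hδ₀le1 : δ₀ ≤ 1 := by rw [hδ₀def]; exact min_le_left _ _
  have hδ₀a : δ₀ ≤ R 0 1 / Q := by
    rw [hδ₀def]; exact le_trans (min_le_right _ _) (min_le_left _ _)
  have hδ₀b : δ₀ ≤ R 1 0 / Q := by
    rw [hδ₀def]
    exact le_trans (min_le_right _ _) (le_trans (min_le_right _ _) (min_le_left _ _))
  have hδ₀c : δ₀ ≤ 4 * R 0 0 / Q2 := by
    rw [hδ₀def]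
    exact le_trans (min_le_right _ _) (le_trans (min_le_right _ _) (min_le_right _ _))
  clear_value c e B S lamA lamB lamC lamS K Q Q2 δ₀
  -- power helpers and orderings on (0, δ₀)
  have horder : ∀ δ : ℝ, δ ∈ Set.Ioo 0 δ₀ →
      lamS δ ≤ lamB δ ∧ lamS δ ≤ lamC δ ∧ lamS δ ≤ lamA δ ∧
      lamB δ ≤ lamA δ ∧ lamC δ ≤ lamA δ := by
    intro δ ⟨hδ0, hδlt⟩
    have hδ1 : δ ≤ 1 := le_trans hδlt.le hδ₀le1
    have hδB : Q * δ ≤ R 0 1 := by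
      have h := le_trans hδlt.le hδ₀a
      calc Q * δ ≤ Q * (R 0 1 / Q) := mul_le_mul_of_nonneg_left h hQ0.le
        _ = R 0 1 := by rw [mul_comm]; exact div_mul_cancel₀ _ hQ0.ne'
    have hδC : Q * δ ≤ R 1 0 := by
      have h := le_trans hδlt.le hδ₀b
      calc Q * δ ≤ Q * (R 1 0 / Q) := mul_le_mul_of_nonneg_left h hQ0.le
        _ = R 1 0 := by rw [mul_comm]; exact div_mul_cancel₀ _ hQ0.ne'
    have hδA : Q2 * δ ≤ 4 * R 0 0 := by
      have h := le_trans hδlt.le hδ₀c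
      calc Q2 * δ ≤ Q2 * (4 * R 0 0 / Q2) := mul_le_mul_of_nonneg_left h hQ20.le
        _ = 4 * R 0 0 := by rw [mul_comm]; exact div_mul_cancel₀ _ hQ20.ne'
    have p21 : δ ^ 2 ≤ δ := by
      simpa using pow_le_pow_of_le_one hδ0.le hδ1 (show 1 ≤ 2 by norm_num)
    have p32 : δ ^ 3 ≤ δ ^ 2 := pow_le_pow_of_le_one hδ0.le hδ1 (by norm_num)
    have p42 : δ ^ 4 ≤ δ ^ 2 := pow_le_pow_of_le_one hδ0.le hδ1 (by norm_num)
    have p64 : δ ^ 6 ≤ δ ^ 4 := pow_le_pow_of_le_one hδ0.le hδ1 (by norm_num)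
    obtain ⟨eS1, eS2⟩ := abs_le.mp (heS δ hδ0 hδ1)
    obtain ⟨eB1, eB2⟩ := abs_le.mp (heB δ hδ0)
    obtain ⟨eC1, eC2⟩ := abs_le.mp (heC δ hδ0)
    obtain ⟨eA1, eA2⟩ := abs_le.mp (heA δ hδ0)
    have u1 : K * δ ^ 6 ≤ K * δ ^ 4 := mul_le_mul_of_nonneg_left p64 hK0.le
    have u2 : K * δ ^ 4 ≤ K * δ ^ 2 := mul_le_mul_of_nonneg_left p42 hK0.le
    have hmainB : (R 1 1 / 4 + 2 * K) * δ ^ 4 ≤ R 0 1 * δ ^ 2 := by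
      have t1 : Q * δ * δ ^ 3 ≤ R 0 1 * δ ^ 3 := mul_le_mul_of_nonneg_right hδB (by positivity)
      have t2 : R 0 1 * δ ^ 3 ≤ R 0 1 * δ ^ 2 := mul_le_mul_of_nonneg_left p32 hR01pos.le
      have t3 : (R 1 1 / 4 + 2 * K) * δ ^ 4 ≤ Q * δ ^ 4 := by
        apply mul_le_mul_of_nonneg_right _ (by positivity)
        rw [hQdef]; linarith
      have t4 : Q * δ ^ 4 = Q * δ * δ ^ 3 := by ring
      linarith
    have hmainC : (R 1 1 / 4 + 2 * K) * δ ^ 4 ≤ R 1 0 * δ ^ 2 := by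
      have t1 : Q * δ * δ ^ 3 ≤ R 1 0 * δ ^ 3 := mul_le_mul_of_nonneg_right hδC (by positivity)
      have t2 : R 1 0 * δ ^ 3 ≤ R 1 0 * δ ^ 2 := mul_le_mul_of_nonneg_left p32 hR10pos.le
      have t3 : (R 1 1 / 4 + 2 * K) * δ ^ 4 ≤ Q * δ ^ 4 := by
        apply mul_le_mul_of_nonneg_right _ (by positivity)
        rw [hQdef]; linarith
      have t4 : Q * δ ^ 4 = Q * δ * δ ^ 3 := by ring
      linarith
    have hmainA : Q2 * δ ^ 2 ≤ 4 * R 0 0 := by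
      have t1 : Q2 * δ ^ 2 ≤ Q2 * δ := mul_le_mul_of_nonneg_left p21 hQ20.le
      linarith
    have hQ2exp : R 0 1 + R 1 0 + R 1 1 / 4 + 2 * K ≤ Q2 := by rw [hQ2def]; linarith
    have hRB : 0 ≤ R 0 1 * δ ^ 2 := by positivity
    have hRC : 0 ≤ R 1 0 * δ ^ 2 := by positivity
    have hRS : 0 ≤ R 1 1 / 4 * δ ^ 4 := by positivity
    have hQ2d : (R 0 1 + R 1 0 + R 1 1 / 4 + 2 * K) * δ ^ 2 ≤ Q2 * δ ^ 2 :=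
      mul_le_mul_of_nonneg_right hQ2exp (by positivity)
    have hd1 : R 0 1 * δ ^ 2 ≤ (R 0 1 + R 1 0 + R 1 1 / 4 + 2 * K) * δ ^ 2 := by
      apply mul_le_mul_of_nonneg_right _ (by positivity)
      linarith [hR10pos, hR11pos, hK0]
    have hd2 : R 1 0 * δ ^ 2 ≤ (R 0 1 + R 1 0 + R 1 1 / 4 + 2 * K) * δ ^ 2 := by
      apply mul_le_mul_of_nonneg_right _ (by positivity)
      linarith [hR01pos, hR11pos, hK0]
    have hd3 : R 1 1 / 4 * δ ^ 2 ≤ (R 0 1 + R 1 0 + R 1 1 / 4 + 2 * K) * δ ^ 2 := by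
      apply mul_le_mul_of_nonneg_right _ (by positivity)
      linarith [hR01pos, hR10pos, hK0]
    have hS42 : R 1 1 / 4 * δ ^ 4 ≤ R 1 1 / 4 * δ ^ 2 :=
      mul_le_mul_of_nonneg_left p42 (by linarith [hR11pos])
    refine ⟨by linarith, by linarith, by linarith, by linarith, by linarith⟩

  -- determinant error constants
  obtain ⟨K1, hK1def⟩ : ∃ x : ℝ, x = K * (R 0 1 + K) + 4 * R 0 0 * K := ⟨_, rfl⟩
  obtain ⟨K2, hK2def⟩ : ∃ x : ℝ, x = K1 * (R 1 0 + K) + 4 * R 0 0 * R 0 1 * K := ⟨_, rfl⟩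
  obtain ⟨K3, hK3def⟩ : ∃ x : ℝ, x = K2 * (R 1 1 / 4 + K) + 4 * R 0 0 * R 0 1 * R 1 0 * K :=
    ⟨_, rfl⟩
  have hK30 : 0 ≤ K3 := by
    have hK10 : 0 ≤ K1 := by
      rw [hK1def]
      have h1 := mul_pos hK0 (show 0 < R 0 1 + K by linarith [hR01pos])
      have h2 := mul_pos (show (0:ℝ) < 4 * R 0 0 by linarith [hR00pos]) hK0
      linarith
    have hK20 : 0 ≤ K2 := by
      rw [hK2def]
      have h1 := mul_nonneg hK10 (show (0:ℝ) ≤ R 1 0 + K by linarith [hR10pos, hK0])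
      have h2 := mul_pos (mul_pos (show (0:ℝ) < 4 * R 0 0 by linarith [hR00pos]) hR01pos) hK0
      linarith
    rw [hK3def]
    have h1 := mul_nonneg hK20 (show (0:ℝ) ≤ R 1 1 / 4 + K by linarith [hR11pos, hK0])
    have h2 := mul_pos (mul_pos (mul_pos
      (show (0:ℝ) < 4 * R 0 0 by linarith [hR00pos]) hR01pos) hR10pos) hK0
    linarith
  have hdetbound : ∀ δ : ℝ, 0 < δ → δ ≤ 1 →
      |(C δ).det - R 0 0 * R 0 1 * R 1 0 * R 1 1 * δ ^ 8| ≤ K3 * δ ^ 9 := by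
    intro δ hδ0 hδ1
    have hp21 : δ ^ 2 ≤ 1 := pow_le_one₀ hδ0.le hδ1
    have hp42 : δ ^ 4 ≤ δ ^ 2 := pow_le_pow_of_le_one hδ0.le hδ1 (by norm_num)
    have hp64 : δ ^ 6 ≤ δ ^ 4 := pow_le_pow_of_le_one hδ0.le hδ1 (by norm_num)
    have eA := heA δ hδ0
    have eB := heB δ hδ0
    have eC := heC δ hδ0
    have eS := heS δ hδ0 hδ1
    have hRB0 : (0:ℝ) ≤ R 0 1 * δ ^ 2 := mul_nonneg hR01pos.le (by positivity)
    have hRC0 : (0:ℝ) ≤ R 1 0 * δ ^ 2 := mul_nonneg hR10pos.le (by positivity)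
    have hRS0 : (0:ℝ) ≤ R 1 1 / 4 * δ ^ 4 := mul_nonneg (by linarith [hR11pos]) (by positivity)
    have bA : |lamA δ| ≤ 4 * R 0 0 + K := by
      obtain ⟨h1, h2⟩ := abs_le.mp eA
      have h3 : K * δ ^ 2 ≤ K * 1 := mul_le_mul_of_nonneg_left hp21 hK0.le
      rw [abs_le]
      constructor <;> linarith [hR00pos, hK0]
    have bB : |lamB δ| ≤ (R 0 1 + K) * δ ^ 2 := by
      obtain ⟨h1, h2⟩ := abs_le.mp eB
      have h3 : K * δ ^ 4 ≤ K * δ ^ 2 := mul_le_mul_of_nonneg_left hp42 hK0.le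
      rw [abs_le]
      constructor <;> linarith [hRB0, hK0]
    have bC : |lamC δ| ≤ (R 1 0 + K) * δ ^ 2 := by
      obtain ⟨h1, h2⟩ := abs_le.mp eC
      have h3 : K * δ ^ 4 ≤ K * δ ^ 2 := mul_le_mul_of_nonneg_left hp42 hK0.le
      rw [abs_le]
      constructor <;> linarith [hRC0, hK0]
    have bS : |lamS δ| ≤ (R 1 1 / 4 + K) * δ ^ 4 := by
      obtain ⟨h1, h2⟩ := abs_le.mp eS
      have h3 : K * δ ^ 6 ≤ K * δ ^ 4 := mul_le_mul_of_nonneg_left hp64 hK0.le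
      rw [abs_le]
      constructor <;> linarith [hRS0, hK0]
    have bP1 : |4 * R 0 0| ≤ 4 * R 0 0 :=
      le_of_eq (abs_of_pos (by linarith [hR00pos]))
    have step1 : |lamA δ * lamB δ - 4 * R 0 0 * (R 0 1 * δ ^ 2)| ≤ K1 * δ ^ 4 := by
      have m := mul_approx eA eB bP1 bB
      calc |lamA δ * lamB δ - 4 * R 0 0 * (R 0 1 * δ ^ 2)|
          ≤ K * δ ^ 2 * ((R 0 1 + K) * δ ^ 2) + 4 * R 0 0 * (K * δ ^ 4) := m
        _ = K1 * δ ^ 4 := by rw [hK1def]; ring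
    have bP2 : |4 * R 0 0 * (R 0 1 * δ ^ 2)| ≤ 4 * R 0 0 * R 0 1 * δ ^ 2 := by
      rw [abs_of_nonneg (mul_nonneg (by linarith [hR00pos]) hRB0)]
      exact le_of_eq (by ring)
    have step2 : |lamA δ * lamB δ * lamC δ -
        4 * R 0 0 * (R 0 1 * δ ^ 2) * (R 1 0 * δ ^ 2)| ≤ K2 * δ ^ 6 := by
      have m := mul_approx step1 eC bP2 bC
      calc |lamA δ * lamB δ * lamC δ - 4 * R 0 0 * (R 0 1 * δ ^ 2) * (R 1 0 * δ ^ 2)|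
          ≤ K1 * δ ^ 4 * ((R 1 0 + K) * δ ^ 2) + 4 * R 0 0 * R 0 1 * δ ^ 2 * (K * δ ^ 4) := m
        _ = K2 * δ ^ 6 := by rw [hK2def, hK1def]; ring
    have bP3 : |4 * R 0 0 * (R 0 1 * δ ^ 2) * (R 1 0 * δ ^ 2)| ≤
        4 * R 0 0 * R 0 1 * R 1 0 * δ ^ 4 := by
      rw [abs_of_nonneg (mul_nonneg (mul_nonneg (by linarith [hR00pos]) hRB0) hRC0)]
      exact le_of_eq (by ring)
    have step3 : |lamA δ * lamB δ * lamC δ * lamS δ -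
        4 * R 0 0 * (R 0 1 * δ ^ 2) * (R 1 0 * δ ^ 2) * (R 1 1 / 4 * δ ^ 4)| ≤
        K3 * δ ^ 10 := by
      have m := mul_approx step2 eS bP3 bS
      calc |lamA δ * lamB δ * lamC δ * lamS δ -
          4 * R 0 0 * (R 0 1 * δ ^ 2) * (R 1 0 * δ ^ 2) * (R 1 1 / 4 * δ ^ 4)|
          ≤ K2 * δ ^ 6 * ((R 1 1 / 4 + K) * δ ^ 4) +
            4 * R 0 0 * R 0 1 * R 1 0 * δ ^ 4 * (K * δ ^ 6) := m
        _ = K3 * δ ^ 10 := by rw [hK3def, hK2def, hK1def]; ring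
    have hprod : 4 * R 0 0 * (R 0 1 * δ ^ 2) * (R 1 0 * δ ^ 2) * (R 1 1 / 4 * δ ^ 4) =
        R 0 0 * R 0 1 * R 1 0 * R 1 1 * δ ^ 8 := by ring
    have h109 : δ ^ 10 ≤ δ ^ 9 := pow_le_pow_of_le_one hδ0.le hδ1 (by norm_num)
    calc |(C δ).det - R 0 0 * R 0 1 * R 1 0 * R 1 1 * δ ^ 8|
        = |lamA δ * lamB δ * lamC δ * lamS δ -
          4 * R 0 0 * (R 0 1 * δ ^ 2) * (R 1 0 * δ ^ 2) * (R 1 1 / 4 * δ ^ 4)| := by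
          rw [hdet δ, hprod]
      _ ≤ K3 * δ ^ 10 := step3
      _ ≤ K3 * δ ^ 9 := mul_le_mul_of_nonneg_left h109 hK30
  -- final assembly
  have hIoo1 : Set.Ioo (0:ℝ) 1 ∈ 𝓝[>] (0:ℝ) :=
    Ioo_mem_nhdsGT_of_mem ⟨le_refl 0, one_pos⟩
  refine ⟨?_, δ₀, hδ₀pos, lamS, lamA, fun _ => ![1 / 2, -(1 / 2), 1 / 2, -(1 / 2)],
    ?_, ?_, ?_, ?_⟩
  · rw [Asymptotics.isBigO_iff]
    refine ⟨K3, ?_⟩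
    filter_upwards [hIoo1] with δ hδ
    rw [Real.norm_eq_abs, Real.norm_eq_abs, abs_of_pos (pow_pos hδ.1 9)]
    exact hdetbound δ hδ.1 hδ.2.le
  · intro δ hδ
    obtain ⟨o1, o2, o3, o4, o5⟩ := horder δ hδ
    refine ⟨hmvS δ, ?_, ⟨![1, 1, 1, 1], ?_, hmvA δ⟩, ?_⟩
    · norm_num [Matrix.cons_val_zero, Matrix.cons_val_one, Matrix.head_cons, Matrix.cons_val_two, Matrix.tail_cons, Matrix.cons_val_three]
    · intro h
      simpa using congrFun h 0
    · intro μ w hw0 hmveq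
      rcases heig δ μ w hw0 hmveq with h | h | h | h <;> rw [h]
      · exact ⟨o3, le_refl _⟩
      · exact ⟨o1, o4⟩
      · exact ⟨o2, o5⟩
      · exact ⟨le_refl _, o3⟩
  · rw [Asymptotics.isBigO_iff]
    refine ⟨K, ?_⟩
    filter_upwards [hIoo1] with δ hδ
    rw [Real.norm_eq_abs, Real.norm_eq_abs, abs_of_pos (pow_pos hδ.1 5)]
    have h65 : δ ^ 6 ≤ δ ^ 5 := pow_le_pow_of_le_one hδ.1.le hδ.2.le (by norm_num)
    calc |lamS δ - R 1 1 / 4 * δ ^ 4| ≤ K * δ ^ 6 := heS δ hδ.1 hδ.2.le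
      _ ≤ K * δ ^ 5 := mul_le_mul_of_nonneg_left h65 hK0.le
  · rw [Asymptotics.isBigO_iff]
    refine ⟨K, ?_⟩
    filter_upwards [hIoo1] with δ hδ
    rw [Real.norm_eq_abs, Real.norm_eq_abs, abs_of_pos hδ.1]
    have h21 : δ ^ 2 ≤ δ := by
      simpa using pow_le_pow_of_le_one hδ.1.le hδ.2.le (show 1 ≤ 2 by norm_num)
    calc |lamA δ - 4 * R 0 0| ≤ K * δ ^ 2 := heA δ hδ.1
      _ ≤ K * δ := mul_le_mul_of_nonneg_left h21 hK0.le
  · exact tendsto_const_nhds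
end
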